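/- arXiv:math/0610726 — 8 statements merged into one kernel-verified Lean document; each statement's English description precedes it below -/
import Mathlib

section
/- Let R be a based ring with basis {X_i}_{i∈I}. Then the element I(1) := Σ_{i∈I} X_i X_{i*} is central in R. -/
/-- A *based ring* (fusion ring): an associative unital ring `R`, free of finite
rank as a `ℤ`-module with a distinguished basis `b : ι → R` indexed by a finite
type, such that all structure constants are nonnegative, the unit `1` is a basis
element, and there is an involution `star` of the index set for which the
induced linear map satisfies `(XY, Z) = (X, ZY*) = (Y, X*Z)` with respect to the
bilinear form making the basis orthonormal. -/
structure BasedRing (ι R : Type*) [Fintype ι] [DecidableEq ι] [Ring R] where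
  b : Module.Basis ι ℤ R
  unit : ι
  b_unit : b unit = 1
  star : ι → ι
  star_invol : ∀ i, star (star i) = i
  c_nonneg : ∀ i j k, 0 ≤ b.repr (b i * b j) k
  adj_right : ∀ i j k, b.repr (b i * b j) k = b.repr (b k * b (star j)) i
  adj_left : ∀ i j k, b.repr (b i * b j) k = b.repr (b (star i) * b k) j

namespace BasedRing

variable {ι R : Type*} [Fintype ι] [DecidableEq ι] [Ring R] (BR : BasedRing ι R)

/-- The element `I(1) = Σ_i X_i X_{i*}`. -/
noncomputable def I1 : R := ∑ i : ι, BR.b i * BR.b (BR.star i)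

end BasedRing

/-- In a based ring `R`, the element `I(1) = Σ_i X_i X_{i*}` is
central in `R`. -/
theorem I1_central {ι R : Type*} [Fintype ι] [DecidableEq ι] [Ring R]
    (BR : BasedRing ι R) :
    ∀ x : R, BR.I1 * x = x * BR.I1 := by
  have hinv : Function.Involutive BR.star := BR.star_invol
  have key : ∀ j, BR.b j * BR.I1 = BR.I1 * BR.b j := by
    intro j
    unfold BasedRing.I1
    rw [Finset.mul_sum, Finset.sum_mul]
    have L : ∀ i, BR.b j * (BR.b i * BR.b (BR.star i))
        = ∑ k, BR.b.repr (BR.b j * BR.b i) k • (BR.b k * BR.b (BR.star i)) := by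
      intro i
      rw [← mul_assoc]
      conv_lhs => rw [← BR.b.sum_repr (BR.b j * BR.b i)]
      rw [Finset.sum_mul]
      simp [smul_mul_assoc, mul_assoc]
    have Rr : ∀ k, BR.b k * BR.b (BR.star k) * BR.b j
        = ∑ m, BR.b.repr (BR.b (BR.star k) * BR.b j) m • (BR.b k * BR.b m) := by
      intro k
      rw [mul_assoc]
      conv_lhs => rw [← BR.b.sum_repr (BR.b (BR.star k) * BR.b j)]
      rw [Finset.mul_sum]
      refine Finset.sum_congr rfl fun m _ => ?_
      rw [zsmul_eq_mul, zsmul_eq_mul, ← mul_assoc,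
        ← (Int.cast_commute _ (BR.b k)).eq, mul_assoc]
    simp_rw [L, Rr]
    rw [Finset.sum_comm]
    refine Finset.sum_congr rfl fun k _ => ?_
    rw [← Equiv.sum_comp hinv.toPerm
      (fun m => BR.b.repr (BR.b (BR.star k) * BR.b j) m • (BR.b k * BR.b m))]
    refine Finset.sum_congr rfl fun i _ => ?_
    have hc : BR.b.repr (BR.b j * BR.b i) k
        = BR.b.repr (BR.b (BR.star k) * BR.b j) (BR.star i) := by
      rw [BR.adj_right j i k, BR.adj_left k (BR.star i) j]
    simp only [Function.Involutive.coe_toPerm, hc]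
  intro x
  conv_lhs => rw [← BR.b.sum_repr x]
  conv_rhs => rw [← BR.b.sum_repr x]
  rw [Finset.mul_sum, Finset.sum_mul]
  refine Finset.sum_congr rfl fun i _ => ?_
  rw [mul_smul_comm, smul_mul_assoc, key]
end

section
/- Let R be a based ring and let M ⊆ R be the ℤ-span of a subset C of the basis B such that R_ad·M ⊆ M (i.e., M is a left based R_ad-submodule of R). Then M·R_ad ⊆ M; that is, every one-sided based R_ad-submodule of R is automatically an R_ad-subbimodule. Consequently, a based R_ad-subbimodule of R is indecomposable as a bimodule if and only if it is indecomposable as a left (equivalently, right) based R_ad-module. -/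
namespace BasedRing

variable {ι R : Type*} [Fintype ι] [DecidableEq ι] [Ring R] (BR : BasedRing ι R)

/-- `x` (with nonnegative coordinates) *contains* the basic element `k`. -/
def contains (x : R) (k : ι) : Prop := 0 < BR.b.repr x k

/-- Index set of the adjoint subring `R_ad`: basic elements contained in some
power `I(1)^n`, `n ≥ 1`. -/
def adBasis : Set ι := {k | ∃ n : ℕ, 1 ≤ n ∧ BR.contains (BR.I1 ^ n) k}

/-- The adjoint subring `R_ad`, as the `ℤ`-span of the corresponding basic elements. -/
def adSub : Submodule ℤ R := Submodule.span ℤ (BR.b '' BR.adBasis)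

/-- The `ℤ`-span of a set of basic elements. -/
def spanOf (C : Set ι) : Submodule ℤ R := Submodule.span ℤ (BR.b '' C)

/-- `C` spans a left based `R_ad`-submodule of `R`. -/
def leftStable (C : Set ι) : Prop :=
  ∀ x ∈ BR.adSub, ∀ m ∈ BR.spanOf C, x * m ∈ BR.spanOf C

/-- `C` spans a right based `R_ad`-submodule of `R`. -/
def rightStable (C : Set ι) : Prop :=
  ∀ m ∈ BR.spanOf C, ∀ x ∈ BR.adSub, m * x ∈ BR.spanOf C

/-- Indecomposability of the span of `C` as a based module, with respect to a
given notion `P` of based submodule: `C` is nonempty, and in any partition of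
`C` into two parts each spanning a `P`-submodule, one part is empty. -/
def indecompFor (P : Set ι → Prop) (C : Set ι) : Prop :=
  C.Nonempty ∧ ∀ C₁ C₂ : Set ι, C₁ ∪ C₂ = C → Disjoint C₁ C₂ →
    P C₁ → P C₂ → C₁ = ∅ ∨ C₂ = ∅

end BasedRing

namespace BasedRing

variable {ι R : Type*} [Fintype ι] [DecidableEq ι] [Ring R] (BR : BasedRing ι R)

set_option linter.unusedSectionVars false
set_option linter.unusedVariables false

-- expansion lemmas
lemma repr_basis_mul (i : ι) (x : R) (k : ι) :
    BR.b.repr (BR.b i * x) k = ∑ m, BR.b.repr x m * BR.b.repr (BR.b i * BR.b m) k := by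
  conv_lhs => rw [← BR.b.sum_repr x]
  rw [Finset.mul_sum, map_sum, Finsupp.coe_finset_sum, Finset.sum_apply]
  refine Finset.sum_congr rfl fun m _ => ?_
  rw [mul_smul_comm, map_smul, Finsupp.smul_apply, smul_eq_mul]

lemma repr_mulL (x y : R) (k : ι) :
    BR.b.repr (x * y) k = ∑ m, BR.b.repr x m * BR.b.repr (BR.b m * y) k := by
  conv_lhs => rw [← BR.b.sum_repr x]
  rw [Finset.sum_mul, map_sum, Finsupp.coe_finset_sum, Finset.sum_apply]
  refine Finset.sum_congr rfl fun m _ => ?_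
  rw [smul_mul_assoc, map_smul, Finsupp.smul_apply, smul_eq_mul]

lemma I1_nonneg (k : ι) : 0 ≤ BR.b.repr BR.I1 k := by
  rw [I1, map_sum, Finsupp.coe_finset_sum, Finset.sum_apply]
  exact Finset.sum_nonneg fun i _ => BR.c_nonneg i (BR.star i) k

lemma I1_pow_nonneg (n : ℕ) (k : ι) : 0 ≤ BR.b.repr (BR.I1 ^ n) k := by
  induction n generalizing k with
  | zero =>
    rw [pow_zero, ← BR.b_unit, BR.b.repr_self]
    by_cases h : BR.unit = k <;> simp [Finsupp.single_apply, h]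
  | succ n ih =>
    rw [pow_succ, repr_mulL]
    refine Finset.sum_nonneg fun m _ => mul_nonneg (ih m) ?_
    rw [repr_basis_mul]
    exact Finset.sum_nonneg fun p _ => mul_nonneg (BR.I1_nonneg p) (BR.c_nonneg m p k)

-- centrality
lemma I1_comm_basis (j : ι) : BR.I1 * BR.b j = BR.b j * BR.I1 := by
  apply BR.b.repr.injective
  ext k
  have lhs : BR.b.repr (BR.I1 * BR.b j) k
      = ∑ i, ∑ m, BR.b.repr (BR.b i * BR.b m) j * BR.b.repr (BR.b i * BR.b m) k := by
    rw [I1, Finset.sum_mul, map_sum, Finsupp.coe_finset_sum, Finset.sum_apply]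
    refine Finset.sum_congr rfl fun i _ => ?_
    rw [mul_assoc, repr_basis_mul]
    refine Finset.sum_congr rfl fun m _ => ?_
    rw [BR.adj_left i m j]
  have rhs : BR.b.repr (BR.b j * BR.I1) k
      = ∑ i, ∑ m, BR.b.repr (BR.b m * BR.b (BR.star i)) j
          * BR.b.repr (BR.b m * BR.b (BR.star i)) k := by
    rw [I1, Finset.mul_sum, map_sum, Finsupp.coe_finset_sum, Finset.sum_apply]
    refine Finset.sum_congr rfl fun i _ => ?_
    rw [← mul_assoc, repr_mulL]
    refine Finset.sum_congr rfl fun m _ => ?_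
    rw [BR.adj_right j i m]
  rw [lhs, rhs]
  conv_rhs => rw [Finset.sum_comm]
  refine Finset.sum_congr rfl fun u _ => ?_
  exact Fintype.sum_bijective BR.star (Function.Involutive.bijective BR.star_invol)
    _ _ (fun x => by rw [BR.star_invol])


lemma I1_pow_comm (n : ℕ) (j : ι) : BR.I1 ^ n * BR.b j = BR.b j * BR.I1 ^ n :=
  (Commute.pow_left (BR.I1_comm_basis j) n)

lemma mem_spanOf {C : Set ι} {x : R} (h : ∀ k, BR.b.repr x k ≠ 0 → k ∈ C) :
    x ∈ BR.spanOf C := by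
  rw [spanOf, Module.Basis.mem_span_image]
  intro k hk
  exact h k (Finsupp.mem_support_iff.mp hk)

lemma spanOf_mem {C : Set ι} {x : R} (hx : x ∈ BR.spanOf C) {k : ι}
    (hk : BR.b.repr x k ≠ 0) : k ∈ C := by
  rw [spanOf, Module.Basis.mem_span_image] at hx
  exact hx (Finsupp.mem_support_iff.mpr hk)

lemma exists_pos_factor {f g : ι → ℤ} (hf : ∀ m, 0 ≤ f m) (hg : ∀ m, 0 ≤ g m)
    (h : 0 < ∑ m, f m * g m) : ∃ m, 0 < f m ∧ 0 < g m := by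
  by_contra hcon
  push_neg at hcon
  have : ∑ m, f m * g m ≤ 0 := by
    refine Finset.sum_nonpos fun m _ => ?_
    rcases lt_or_eq_of_le (hf m) with hfm | hfm
    · have := hcon m hfm
      exact mul_nonpos_of_nonneg_of_nonpos (hf m) this
    · rw [← hfm, zero_mul]
  exact absurd h (not_lt.mpr this)

lemma core_left {C : Set ι} (hC : BR.leftStable C) {c a : ι} (hc : c ∈ C)
    (ha : a ∈ BR.adBasis) : BR.b c * BR.b a ∈ BR.spanOf C := by
  obtain ⟨n, hn, hpos⟩ := ha
  refine BR.mem_spanOf fun k hk => ?_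
  have hck : 0 < BR.b.repr (BR.b c * BR.b a) k :=
    lt_of_le_of_ne (BR.c_nonneg c a k) (Ne.symm hk)
  have h1 : 0 < BR.b.repr (BR.b c * BR.I1 ^ n) k := by
    rw [repr_basis_mul]
    refine Finset.sum_pos'
      (fun m _ => mul_nonneg (BR.I1_pow_nonneg n m) (BR.c_nonneg c m k))
      ⟨a, Finset.mem_univ a, mul_pos hpos hck⟩
  rw [← BR.I1_pow_comm n c, repr_mulL] at h1
  obtain ⟨m, hm1, hm2⟩ := BasedRing.exists_pos_factor (BR.I1_pow_nonneg n)
    (fun m => BR.c_nonneg m c k) h1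
  have hmad : m ∈ BR.adBasis := ⟨n, hn, hm1⟩
  have hmem : BR.b m * BR.b c ∈ BR.spanOf C :=
    hC (BR.b m) (Submodule.subset_span ⟨m, hmad, rfl⟩)
      (BR.b c) (Submodule.subset_span ⟨c, hc, rfl⟩)
  exact BR.spanOf_mem hmem (ne_of_gt hm2)

lemma core_right {C : Set ι} (hC : BR.rightStable C) {c a : ι} (hc : c ∈ C)
    (ha : a ∈ BR.adBasis) : BR.b a * BR.b c ∈ BR.spanOf C := by
  obtain ⟨n, hn, hpos⟩ := ha
  refine BR.mem_spanOf fun k hk => ?_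
  have hck : 0 < BR.b.repr (BR.b a * BR.b c) k :=
    lt_of_le_of_ne (BR.c_nonneg a c k) (Ne.symm hk)
  have h1 : 0 < BR.b.repr (BR.I1 ^ n * BR.b c) k := by
    rw [repr_mulL]
    refine Finset.sum_pos'
      (fun m _ => mul_nonneg (BR.I1_pow_nonneg n m) (BR.c_nonneg m c k))
      ⟨a, Finset.mem_univ a, mul_pos hpos hck⟩
  rw [BR.I1_pow_comm n c, repr_basis_mul] at h1
  obtain ⟨m, hm1, hm2⟩ := BasedRing.exists_pos_factor (BR.I1_pow_nonneg n)
    (fun m => BR.c_nonneg c m k) h1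
  have hmad : m ∈ BR.adBasis := ⟨n, hn, hm1⟩
  have hmem : BR.b c * BR.b m ∈ BR.spanOf C :=
    hC (BR.b c) (Submodule.subset_span ⟨c, hc, rfl⟩)
      (BR.b m) (Submodule.subset_span ⟨m, hmad, rfl⟩)
  exact BR.spanOf_mem hmem (ne_of_gt hm2)

lemma left_to_right {C : Set ι} (hC : BR.leftStable C) : BR.rightStable C := by
  intro m hm x hx
  have hx' : x ∈ Submodule.span ℤ (BR.b '' BR.adBasis) := hx
  have hm' : m ∈ Submodule.span ℤ (BR.b '' C) := hm
  refine Submodule.span_induction (p := fun y _ => m * y ∈ BR.spanOf C)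
    ?_ ?_ ?_ ?_ hx'
  · intro y hy
    obtain ⟨a, ha, rfl⟩ := hy
    refine Submodule.span_induction (p := fun z _ => z * BR.b a ∈ BR.spanOf C)
      ?_ ?_ ?_ ?_ hm'
    · rintro z ⟨c, hcC, rfl⟩
      exact BR.core_left hC hcC ha
    · show (0 : R) * BR.b a ∈ BR.spanOf C
      rw [zero_mul]; exact zero_mem _
    · intro u v _ _ h1 h2; rw [add_mul]; exact add_mem h1 h2
    · intro r z _ h; rw [smul_mul_assoc]; exact Submodule.smul_mem _ _ h
  · show m * (0 : R) ∈ BR.spanOf C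
    rw [mul_zero]; exact zero_mem _
  · intro u v _ _ h1 h2; rw [mul_add]; exact add_mem h1 h2
  · intro r z _ h; rw [mul_smul_comm]; exact Submodule.smul_mem _ _ h

lemma right_to_left {C : Set ι} (hC : BR.rightStable C) : BR.leftStable C := by
  intro x hx m hm
  have hx' : x ∈ Submodule.span ℤ (BR.b '' BR.adBasis) := hx
  have hm' : m ∈ Submodule.span ℤ (BR.b '' C) := hm
  refine Submodule.span_induction (p := fun y _ => y * m ∈ BR.spanOf C)
    ?_ ?_ ?_ ?_ hx'
  · intro y hy
    obtain ⟨a, ha, rfl⟩ := hy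
    refine Submodule.span_induction (p := fun z _ => BR.b a * z ∈ BR.spanOf C)
      ?_ ?_ ?_ ?_ hm'
    · rintro z ⟨c, hcC, rfl⟩
      exact BR.core_right hC hcC ha
    · show BR.b a * (0 : R) ∈ BR.spanOf C
      rw [mul_zero]; exact zero_mem _
    · intro u v _ _ h1 h2; rw [mul_add]; exact add_mem h1 h2
    · intro r z _ h; rw [mul_smul_comm]; exact Submodule.smul_mem _ _ h
  · show (0 : R) * m ∈ BR.spanOf C
    rw [zero_mul]; exact zero_mem _
  · intro u v _ _ h1 h2; rw [add_mul]; exact add_mem h1 h2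
  · intro r z _ h; rw [smul_mul_assoc]; exact Submodule.smul_mem _ _ h


end BasedRing

/-- If `M ⊆ R` is the `ℤ`-span of a subset `C` of the basis with
`R_ad · M ⊆ M`, then also `M · R_ad ⊆ M`: every one-sided based
`R_ad`-submodule of `R` is automatically an `R_ad`-subbimodule. Consequently, a
based `R_ad`-subbimodule of `R` is indecomposable as a bimodule if and only if
it is indecomposable as a left (equivalently, right) based `R_ad`-module. -/
theorem one_sided_submodule_is_bimodule {ι R : Type*} [Fintype ι] [DecidableEq ι]
    [Ring R] (BR : BasedRing ι R) (C : Set ι) (hC : BR.leftStable C) :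
    BR.rightStable C ∧
    (BasedRing.indecompFor (fun D => BR.leftStable D ∧ BR.rightStable D) C ↔
      BasedRing.indecompFor BR.leftStable C) ∧
    (BasedRing.indecompFor (fun D => BR.leftStable D ∧ BR.rightStable D) C ↔
      BasedRing.indecompFor BR.rightStable C) := by
  refine ⟨BR.left_to_right hC, ⟨?_, ?_⟩, ⟨?_, ?_⟩⟩
  · rintro ⟨hne, h⟩
    exact ⟨hne, fun C₁ C₂ hu hd h1 h2 =>
      h C₁ C₂ hu hd ⟨h1, BR.left_to_right h1⟩ ⟨h2, BR.left_to_right h2⟩⟩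
  · rintro ⟨hne, h⟩
    exact ⟨hne, fun C₁ C₂ hu hd h1 h2 => h C₁ C₂ hu hd h1.1 h2.1⟩
  · rintro ⟨hne, h⟩
    exact ⟨hne, fun C₁ C₂ hu hd h1 h2 =>
      h C₁ C₂ hu hd ⟨BR.right_to_left h1, h1⟩ ⟨BR.right_to_left h2, h2⟩⟩
  · rintro ⟨hne, h⟩
    exact ⟨hne, fun C₁ C₂ hu hd h1 h2 => h C₁ C₂ hu hd h1.2 h2.2⟩
end

section
/- Let R be a based ring with universal grading R = ⊕_{a∈U(R)} R_a, where the components R_a are spanned by the equivalence classes of the relation X ~ Y iff Y is contained in I(1)^n·X for some n ≥ 0. If R = ⊕_{g∈G} R^g is any grading of R by a group G, then the trivial component R^e contains R_ad; moreover, each universal component R_a is contained in R^{π(a)} for a unique π(a) ∈ G, the map π : U(R) → G is a group homomorphism, and π is surjective whenever the grading by G is faithful. (Thus every faithful grading of R arises from a quotient of U(R).) -/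
namespace BasedRing

variable {ι R : Type*} [Fintype ι] [DecidableEq ι] [Ring R] (BR : BasedRing ι R)

/-- The relation `X ~ Y` iff `Y` is contained in `I(1)^n · X` for some `n ≥ 0`,
whose classes are the components of the universal grading of `R`. -/
def rel (i j : ι) : Prop := ∃ n : ℕ, BR.contains (BR.I1 ^ n * BR.b i) j

/-! ### Auxiliary lemmas -/

/-- `x` has nonnegative coordinates. -/
def nn (x : R) : Prop := ∀ k, 0 ≤ BR.b.repr x k

lemma nn_basic (i : ι) : BR.nn (BR.b i) := by
  intro k
  rw [BR.b.repr_self]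
  rcases eq_or_ne k i with h | h
  · simp [h]
  · simp [Finsupp.single_eq_of_ne h]

lemma repr_mul (x y : R) (k : ι) :
    BR.b.repr (x * y) k =
      ∑ p, ∑ q, BR.b.repr x p * BR.b.repr y q * BR.b.repr (BR.b p * BR.b q) k := by
  conv_lhs => rw [← BR.b.sum_repr x, ← BR.b.sum_repr y]
  rw [Finset.sum_mul_sum, map_sum, Finsupp.finset_sum_apply]
  refine Finset.sum_congr rfl fun p _ => ?_
  rw [map_sum, Finsupp.finset_sum_apply]
  refine Finset.sum_congr rfl fun q _ => ?_
  rw [smul_mul_smul_comm, map_zsmul, Finsupp.smul_apply, smul_eq_mul]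

lemma nn_mul {x y : R} (hx : BR.nn x) (hy : BR.nn y) : BR.nn (x * y) := by
  intro k
  rw [BR.repr_mul]
  refine Finset.sum_nonneg fun p _ => Finset.sum_nonneg fun q _ => ?_
  exact mul_nonneg (mul_nonneg (hx p) (hy q)) (BR.c_nonneg p q k)

lemma exists_of_contains_mul {x y : R} {k : ι} (hx : BR.nn x) (hy : BR.nn y)
    (h : BR.contains (x * y) k) :
    ∃ p q, BR.contains x p ∧ BR.contains y q ∧ BR.contains (BR.b p * BR.b q) k := by
  unfold contains at h ⊢
  rw [BR.repr_mul] at h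
  have h1 : ∃ p ∈ Finset.univ (α := ι), 0 <
      ∑ q, BR.b.repr x p * BR.b.repr y q * BR.b.repr (BR.b p * BR.b q) k := by
    by_contra hc
    push_neg at hc
    exact absurd (Finset.sum_nonpos fun p hp => hc p hp) (not_le.mpr h)
  obtain ⟨p, -, hp⟩ := h1
  have h2 : ∃ q ∈ Finset.univ (α := ι),
      0 < BR.b.repr x p * BR.b.repr y q * BR.b.repr (BR.b p * BR.b q) k := by
    by_contra hc
    push_neg at hc
    exact absurd (Finset.sum_nonpos fun q hq => hc q hq) (not_le.mpr hp)
  obtain ⟨q, -, hq⟩ := h2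
  refine ⟨p, q, ?_, ?_, ?_⟩
  · rcases (hx p).lt_or_eq with h' | h'
    · exact h'
    · exfalso; rw [← h'] at hq; simp at hq
  · rcases (hy q).lt_or_eq with h' | h'
    · exact h'
    · exfalso; rw [← h'] at hq; simp at hq
  · rcases (BR.c_nonneg p q k).lt_or_eq with h' | h'
    · exact h'
    · exfalso; rw [← h'] at hq; simp at hq

lemma contains_basic_iff {i k : ι} : BR.contains (BR.b i) k ↔ k = i := by
  unfold contains
  rw [BR.b.repr_self]
  rcases eq_or_ne k i with h | h
  · simp [h]
  · simp [Finsupp.single_eq_of_ne (Ne.symm h), h]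

lemma contains_one_iff {k : ι} : BR.contains (1 : R) k ↔ k = BR.unit := by
  rw [← BR.b_unit]; exact BR.contains_basic_iff

lemma nn_I1 : BR.nn BR.I1 := by
  intro k
  unfold I1
  rw [map_sum, Finsupp.finset_sum_apply]
  exact Finset.sum_nonneg fun i _ => BR.c_nonneg i (BR.star i) k

lemma nn_one : BR.nn (1 : R) := by rw [← BR.b_unit]; exact BR.nn_basic _

lemma nn_pow (n : ℕ) : BR.nn (BR.I1 ^ n) := by
  induction n with
  | zero => simpa using BR.nn_one
  | succ n ih => rw [pow_succ]; exact BR.nn_mul ih BR.nn_I1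

lemma exists_of_contains_I1 {q : ι} (h : BR.contains BR.I1 q) :
    ∃ i, BR.contains (BR.b i * BR.b (BR.star i)) q := by
  unfold contains at h ⊢
  unfold I1 at h
  rw [map_sum, Finsupp.finset_sum_apply] at h
  by_contra hc
  push_neg at hc
  exact absurd (Finset.sum_nonpos fun i _ => hc i) (not_le.mpr h)

lemma repr_mul_unit_right (i : ι) : BR.b.repr (BR.b i * BR.b BR.unit) i = 1 := by
  rw [BR.b_unit, mul_one, BR.b.repr_self, Finsupp.single_eq_same]

lemma repr_basic_mul_star_unit (j : ι) :
    BR.b.repr (BR.b j * BR.b (BR.star j)) BR.unit = 1 := by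
  rw [BR.adj_right, BR.star_invol, BR.b_unit, one_mul, BR.b.repr_self,
    Finsupp.single_eq_same]

/-- The product of two basic elements is nonzero: it contains some basic element. -/
lemma exists_contains_basic_mul (i j : ι) : ∃ k, BR.contains (BR.b i * BR.b j) k := by
  have key : BR.contains ((BR.b i * BR.b j) * BR.b (BR.star j)) i := by
    unfold contains
    rw [mul_assoc, BR.repr_mul]
    have hterm : ∀ p ∈ Finset.univ (α := ι), (0:ℤ) ≤
        ∑ q, BR.b.repr (BR.b i) p * BR.b.repr (BR.b j * BR.b (BR.star j)) q *
          BR.b.repr (BR.b p * BR.b q) i := by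
      intro p _
      exact Finset.sum_nonneg fun q _ => mul_nonneg
        (mul_nonneg (BR.nn_basic i p) (BR.nn_mul (BR.nn_basic j) (BR.nn_basic _) q))
        (BR.c_nonneg p q i)
    have hi : (0:ℤ) < ∑ q, BR.b.repr (BR.b i) i * BR.b.repr (BR.b j * BR.b (BR.star j)) q *
        BR.b.repr (BR.b i * BR.b q) i := by
      have hone : ∀ q ∈ Finset.univ (α := ι), (0:ℤ) ≤
          BR.b.repr (BR.b i) i * BR.b.repr (BR.b j * BR.b (BR.star j)) q *
          BR.b.repr (BR.b i * BR.b q) i := fun q _ => mul_nonneg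
        (mul_nonneg (BR.nn_basic i i) (BR.nn_mul (BR.nn_basic j) (BR.nn_basic _) q))
        (BR.c_nonneg i q i)
      have hu : BR.b.repr (BR.b i) i * BR.b.repr (BR.b j * BR.b (BR.star j)) BR.unit *
          BR.b.repr (BR.b i * BR.b BR.unit) i = 1 := by
        rw [BR.b.repr_self, Finsupp.single_eq_same, BR.repr_basic_mul_star_unit,
          BR.repr_mul_unit_right]
        ring
      calc (0:ℤ) < 1 := one_pos
        _ = _ := hu.symm
        _ ≤ _ := Finset.single_le_sum hone (Finset.mem_univ BR.unit)
    calc (0:ℤ) < _ := hi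
      _ ≤ _ := Finset.single_le_sum hterm (Finset.mem_univ i)
  obtain ⟨p, q, hp, -, -⟩ := BR.exists_of_contains_mul
    (BR.nn_mul (BR.nn_basic i) (BR.nn_basic j)) (BR.nn_basic _) key
  exact ⟨p, hp⟩

end BasedRing

/-- Let `R = ⊕_{g∈G} R^g` be any grading of `R` by a group `G`
(given by the degree map `deg : ι → G` on basic elements, satisfying the
grading axioms), and let `u : ι → U` realize the universal grading of `R`
(so `U` is a group, `u` is surjective, its fibers are the classes of `~`, and
`u` is multiplicative on constituents of products). Then the trivial component
contains `R_ad` (every basic element of `R_ad` has degree `1`), each universal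
component lies in a single component `R^{π(a)}`, the resulting map
`π : U(R) → G` is the unique group homomorphism with `deg = π ∘ u`, and `π` is
surjective whenever the grading by `G` is faithful. Hence every faithful
grading of `R` arises from a quotient of `U(R)`. -/
theorem grading_from_universal {ι R : Type*} [Fintype ι] [DecidableEq ι]
    [Ring R] (BR : BasedRing ι R) {G : Type*} [Group G] (deg : ι → G)
    (hdeg_mul : ∀ i j k, BR.contains (BR.b i * BR.b j) k → deg k = deg i * deg j)
    (hdeg_star : ∀ i, deg (BR.star i) = (deg i)⁻¹)
    {U : Type*} [Group U] (u : ι → U)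
    (hu_surj : Function.Surjective u)
    (hu_rel : ∀ i j, BR.rel i j ↔ u i = u j)
    (hu_mul : ∀ i j k, BR.contains (BR.b i * BR.b j) k → u k = u i * u j) :
    (∀ i ∈ BR.adBasis, deg i = 1) ∧
    ∃ π : U →* G,
      (∀ i, deg i = π (u i)) ∧
      (∀ π' : U →* G, (∀ i, deg i = π' (u i)) → π' = π) ∧
      ((∀ g : G, ∃ i, deg i = g) → Function.Surjective π) := by
  -- degree of the unit is 1
  have hcu : BR.contains (BR.b BR.unit * BR.b BR.unit) BR.unit := by
    rw [BR.b_unit, one_mul]; exact BR.contains_one_iff.mpr rfl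
  have hdu : deg BR.unit = 1 := by
    have h := hdeg_mul _ _ _ hcu
    have h2 : deg BR.unit * 1 = deg BR.unit * deg BR.unit := by rw [mul_one]; exact h
    exact (mul_left_cancel h2).symm
  -- constituents of I1 ^ n have degree 1
  have hpow : ∀ n k, BR.contains (BR.I1 ^ n) k → deg k = 1 := by
    intro n
    induction n with
    | zero =>
      intro k hk
      rw [pow_zero] at hk
      rw [BR.contains_one_iff.mp hk]; exact hdu
    | succ n ih =>
      intro k hk
      rw [pow_succ] at hk
      obtain ⟨p, q, hp, hq, hpq⟩ := BR.exists_of_contains_mul (BR.nn_pow n) BR.nn_I1 hk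
      obtain ⟨i, hi⟩ := BR.exists_of_contains_I1 hq
      have hq1 : deg q = 1 := by
        rw [hdeg_mul _ _ _ hi, hdeg_star]
        group
      rw [hdeg_mul _ _ _ hpq, ih p hp, hq1, one_mul]
  -- deg is constant on fibers of u
  have hwd : ∀ i j, u i = u j → deg i = deg j := by
    intro i j hij
    obtain ⟨n, hn⟩ := (hu_rel i j).mpr hij
    obtain ⟨p, q, hp, hq, hpq⟩ := BR.exists_of_contains_mul (BR.nn_pow n) (BR.nn_basic i) hn
    rw [BR.contains_basic_iff] at hq
    rw [hq] at hpq
    have h2 : deg j = deg p * deg i := hdeg_mul _ _ _ hpq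
    rw [h2, hpow n p hp, one_mul]
  -- a section of u
  choose s hs using hu_surj
  have hkey : ∀ i, deg (s (u i)) = deg i := fun i => hwd _ _ (hs (u i))
  have hmul : ∀ a b : U, deg (s (a * b)) = deg (s a) * deg (s b) := by
    intro a b
    obtain ⟨k, hk⟩ := BR.exists_contains_basic_mul (s a) (s b)
    have huk : u k = a * b := by rw [hu_mul _ _ _ hk, hs, hs]
    have h1 : deg (s (a * b)) = deg k := hwd _ _ (by rw [hs, huk])
    rw [h1, hdeg_mul _ _ _ hk]
  refine ⟨?_, MonoidHom.mk' (fun a => deg (s a)) hmul, ?_, ?_, ?_⟩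
  · rintro i ⟨n, -, hc⟩
    exact hpow n i hc
  · intro i
    exact (hkey i).symm
  · intro π' hπ'
    ext a
    calc π' a = π' (u (s a)) := by rw [hs]
      _ = deg (s a) := (hπ' (s a)).symm
      _ = _ := rfl
  · intro hfaith g
    obtain ⟨i, hi⟩ := hfaith g
    exact ⟨u i, by simpa [hkey i] using hi⟩
end

section
/- Let R be a based ring such that FPdim(R) is an integer. Then FPdim(X)² is a positive integer for every basic X ∈ R, and there exist an elementary abelian 2-group E, distinct squarefree positive integers n_x for x ∈ E with n_{identity} = 1, and a faithful grading R = ⊕_{x∈E} R(n_x) such that FPdim(X) ∈ ℤ·√(n_x) for each basic X ∈ R(n_x). Concretely: writing sq(X) for the squarefree part of FPdim(X)², one has, for all basic X, Y and every basic Z contained in XY, that sq(Z) equals the squarefree part of sq(X)·sq(Y); the partition of the basis according to the value of sq is the asserted faithful grading, and the squarefree values that occur form an elementary abelian 2-group under (n, m) ↦ squarefree part of nm. -/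
/-- Core parity lemma: if `w * u * a² = b²` with `w, u` squarefree, `a > 0`, then `w = u`. -/
lemma squarefree_eq_of_mul_mul_sq {w u a b : ℕ} (hw : Squarefree w) (hu : Squarefree u)
    (ha : a ≠ 0) (h : w * u * a ^ 2 = b ^ 2) : w = u := by
  have hw0 : w ≠ 0 := hw.ne_zero
  have hu0 : u ≠ 0 := hu.ne_zero
  have hb2 : b ^ 2 ≠ 0 := by
    rw [← h]; exact Nat.mul_ne_zero (Nat.mul_ne_zero hw0 hu0) (pow_ne_zero _ ha)
  have hb : b ≠ 0 := fun hb0 => by simp [hb0] at hb2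
  refine Nat.eq_of_factorization_eq hw0 hu0 fun p => ?_
  have key := congrArg (fun n => n.factorization p) h
  simp only [Nat.factorization_mul (Nat.mul_ne_zero hw0 hu0) (pow_ne_zero _ ha),
    Nat.factorization_mul hw0 hu0, Nat.factorization_pow, Finsupp.add_apply,
    Finsupp.smul_apply, smul_eq_mul] at key
  have h1 := hw.natFactorization_le_one p
  have h2 := hu.natFactorization_le_one p
  omega

noncomputable def sqp (n : ℕ) : ℕ := (Nat.sq_mul_squarefree n).choose

lemma sqp_spec (n : ℕ) : ∃ b, b ^ 2 * sqp n = n ∧ Squarefree (sqp n) := by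
  obtain ⟨b, hb⟩ := (Nat.sq_mul_squarefree n).choose_spec
  exact ⟨b, hb.1, hb.2⟩

lemma sqp_squarefree (n : ℕ) : Squarefree (sqp n) := (sqp_spec n).choose_spec.2

lemma sqp_eq {n s m : ℕ} (hn : 0 < n) (hs : Squarefree s) (hm : m ^ 2 * s = n) : sqp n = s := by
  obtain ⟨b, hb, hsf⟩ := sqp_spec n
  have hb0 : b ≠ 0 := by rintro rfl; rw [← hb] at hn; simp at hn
  have hm0 : m ≠ 0 := by rintro rfl; rw [← hm] at hn; simp at hn
  refine squarefree_eq_of_mul_mul_sq hsf hs (a := b * m) (b := n)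
    (Nat.mul_ne_zero hb0 hm0) ?_
  calc sqp n * s * (b * m) ^ 2 = (b ^ 2 * sqp n) * (m ^ 2 * s) := by ring
    _ = n ^ 2 := by rw [hb, hm]; ring

/-- Existence form with positivity. -/
lemma sqp_exists_pos {n : ℕ} (hn : 0 < n) : ∃ b, 0 < b ∧ b ^ 2 * sqp n = n := by
  obtain ⟨b, hb, -⟩ := sqp_spec n
  refine ⟨b, ?_, hb⟩
  rcases Nat.eq_zero_or_pos b with rfl | h
  · rw [← hb] at hn; simp at hn
  · exact h


open IntermediateField in
lemma rat_of_fixed (K : IntermediateField ℚ ℝ) [Algebra.IsAlgebraic ℚ K] (x : K)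
    (h : ∀ σ : K →ₐ[ℚ] ℂ, σ x = ((x : ℝ) : ℂ)) : ∃ q : ℚ, (x : ℝ) = q := by
  have hint : IsIntegral ℚ x := (Algebra.IsAlgebraic.isAlgebraic x).isIntegral
  have hroot : (Set.range fun ψ : K →ₐ[ℚ] ℂ => ψ x) = (minpoly ℚ x).rootSet ℂ :=
    Algebra.IsAlgebraic.range_eval_eq_rootSet_minpoly ℂ x
  let σ₀ : K →ₐ[ℚ] ℂ := (Complex.ofRealAm.restrictScalars ℚ).comp K.val
  have hsingle : (minpoly ℚ x).rootSet ℂ = {((x : ℝ) : ℂ)} := by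
    rw [← hroot]
    apply Set.eq_singleton_iff_nonempty_unique_mem.2
    exact ⟨⟨σ₀ x, σ₀, rfl⟩, by rintro _ ⟨σ, rfl⟩; exact h σ⟩
  have hsep : (minpoly ℚ x).Separable := (minpoly.irreducible hint).separable
  have hsplits : Polynomial.Splits ((minpoly ℚ x).map (algebraMap ℚ ℂ)) :=
    IsAlgClosed.splits _
  have hcard : Fintype.card ((minpoly ℚ x).rootSet ℂ) = (minpoly ℚ x).natDegree :=
    Polynomial.card_rootSet_eq_natDegree hsep hsplits
  have hdeg : (minpoly ℚ x).natDegree = 1 := by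
    rw [← hcard, Fintype.card_eq_one_iff]
    refine ⟨⟨((x:ℝ):ℂ), by rw [hsingle]; exact rfl⟩, ?_⟩
    rintro ⟨y, hy⟩
    rw [hsingle] at hy
    exact Subtype.ext hy
  have : (minpoly ℚ x).degree = 1 := by
    rw [Polynomial.degree_eq_natDegree (minpoly.ne_zero hint), hdeg]; rfl
  obtain ⟨q, hq⟩ := minpoly.degree_eq_one_iff.1 this
  exact ⟨q, by rw [← hq]; rfl⟩

theorem key_galois {ι : Type*} [Fintype ι] [DecidableEq ι]
    (d : ι → ℝ) (c : ι → ι → ι → ℤ) (unit : ι)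
    (hd : ∀ i, 0 < d i) (hdu : d unit = 1)
    (hc : ∀ i j k, 0 ≤ c i j k)
    (hmul : ∀ i j, d i * d j = ∑ k, (c i j k : ℝ) * d k)
    (hint : ∃ m : ℤ, (∑ i, d i ^ 2) = (m : ℝ)) :
    (∀ i, IsIntegral ℤ (d i)) ∧
    (∀ i, ∃ q : ℚ, d i ^ 2 = (q : ℝ)) ∧
    (∀ i j k, 0 < c i j k → ∃ q : ℚ, d i * d j * d k = (q : ℝ)) := by
  classical
  obtain ⟨m, hm⟩ := hint
  -- Step 1: each `d i` is an algebraic integer.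
  have hdint : ∀ i, IsIntegral ℤ (d i) := by
    intro i
    set N : Submodule ℤ ℝ := Submodule.span ℤ (Set.range d) with hN
    refine isIntegral_of_smul_mem_submodule N ?_ ?_ (d i) ?_
    · intro hbot
      have h1 : d unit ∈ N := Submodule.subset_span ⟨unit, rfl⟩
      rw [hbot] at h1
      simp only [Submodule.mem_bot] at h1
      rw [hdu] at h1; exact one_ne_zero h1
    · exact Submodule.fg_span (Set.finite_range d)
    · intro n hn
      induction hn using Submodule.span_induction with
      | mem x hx =>
        obtain ⟨j, rfl⟩ := hx
        have : d i • d j = ∑ k, (c i j k) • d k := by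
          simp only [smul_eq_mul, zsmul_eq_mul]; exact hmul i j
        rw [this]
        exact Submodule.sum_mem _ fun k _ =>
          Submodule.smul_mem _ _ (Submodule.subset_span ⟨k, rfl⟩)
      | zero => simp
      | add x y _ _ hx hy => rw [smul_add]; exact Submodule.add_mem _ hx hy
      | smul r x _ hx => rw [smul_comm]; exact Submodule.smul_mem _ _ hx
  -- Step 2: set up the number field `K`.
  set K : IntermediateField ℚ ℝ := IntermediateField.adjoin ℚ (Set.range d) with hK
  haveI halg : Algebra.IsAlgebraic ℚ K := by
    refine IntermediateField.isAlgebraic_adjoin fun x hx => ?_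
    obtain ⟨i, rfl⟩ := hx
    exact (hdint i).tower_top
  set D : ι → K := fun i => ⟨d i, IntermediateField.subset_adjoin ℚ _ ⟨i, rfl⟩⟩ with hD
  have hDcoe : ∀ i, (D i : ℝ) = d i := fun i => rfl
  have hmulK : ∀ i j, D i * D j = ∑ k, (c i j k : K) * D k := by
    intro i j
    apply Subtype.coe_injective
    push_cast
    exact hmul i j
  have hsumK : (∑ i, (D i) ^ 2) = ((m : ℚ) : K) := by
    apply Subtype.coe_injective
    push_cast
    exact hm
  -- Step 3: Perron bound for each embedding.
  have hperron : ∀ (σ : K →ₐ[ℚ] ℂ) i, ‖σ (D i)‖ ≤ d i := by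
    intro σ i
    have hmulw : ∀ i j, σ (D i) * σ (D j) = ∑ k, (c i j k : ℂ) * σ (D k) := by
      intro i j
      rw [← map_mul, hmulK i j, map_sum]
      congr 1; funext k
      rw [map_mul, map_intCast]
    obtain ⟨j₀, -, hj₀⟩ := Finset.exists_max_image Finset.univ
      (fun j => ‖σ (D j)‖ / d j) ⟨unit, Finset.mem_univ unit⟩
    set t := ‖σ (D j₀)‖ / d j₀ with ht
    have hone : 1 ≤ t := by
      have h1 : ‖σ (D unit)‖ / d unit ≤ t := hj₀ unit (Finset.mem_univ unit)
      have hDu : D unit = 1 := by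
        apply Subtype.coe_injective
        exact hdu
      rw [hDu, map_one, hdu] at h1
      simpa using h1
    have htpos : 0 < t := lt_of_lt_of_le one_pos hone
    have hbound : ∀ k, ‖σ (D k)‖ ≤ t * d k := by
      intro k
      have := hj₀ k (Finset.mem_univ k)
      rw [div_le_iff₀ (hd k)] at this
      linarith [this]
    have key : ‖σ (D i)‖ * ‖σ (D j₀)‖ ≤ t * (d i * d j₀) := by
      rw [← norm_mul, hmulw i j₀]
      calc ‖∑ k, (c i j₀ k : ℂ) * σ (D k)‖ ≤
          ∑ k, ‖(c i j₀ k : ℂ) * σ (D k)‖ :=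
            norm_sum_le _ _
        _ ≤ ∑ k, (c i j₀ k : ℝ) * (t * d k) := by
            refine Finset.sum_le_sum fun k _ => ?_
            rw [norm_mul]
            have h1 : ‖(c i j₀ k : ℂ)‖ = (c i j₀ k : ℝ) := by
              rw [show ((c i j₀ k : ℤ) : ℂ) = ((c i j₀ k : ℝ) : ℂ) by push_cast; ring,
                Complex.norm_real, Real.norm_eq_abs, abs_of_nonneg (by exact_mod_cast hc i j₀ k)]
            rw [h1]
            exact mul_le_mul_of_nonneg_left (hbound k) (by exact_mod_cast hc i j₀ k)
        _ = t * (d i * d j₀) := by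
            rw [hmul i j₀, Finset.mul_sum]
            congr 1; funext k; ring
    have habs : ‖σ (D j₀)‖ = t * d j₀ := by
      rw [ht, div_mul_cancel₀]
      exact (hd j₀).ne'
    rw [habs] at key
    have hpos : 0 < t * d j₀ := mul_pos htpos (hd j₀)
    have key2 : ‖σ (D i)‖ * (t * d j₀) ≤ d i * (t * d j₀) := by
      nlinarith [key]
    exact le_of_mul_le_mul_right key2 hpos
  -- Step 4: every embedding fixes each `d i ^ 2`.
  have hfix2 : ∀ (σ : K →ₐ[ℚ] ℂ) i, σ (D i) ^ 2 = ((d i ^ 2 : ℝ) : ℂ) := by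
    intro σ i
    have hsums : ∑ j, σ (D j) ^ 2 = ((m : ℝ) : ℂ) := by
      have h := congrArg σ hsumK
      rw [map_sum] at h
      simp only [map_pow] at h
      rw [h, map_ratCast]
      push_cast
      ring
    have habsle : ∀ j, ‖σ (D j) ^ 2‖ ≤ d j ^ 2 := by
      intro j
      rw [norm_pow]
      have := hperron σ j
      have h0 := norm_nonneg (σ (D j))
      nlinarith
    have hrle : ∀ j, (σ (D j) ^ 2).re ≤ d j ^ 2 := fun j =>
      le_trans (Complex.re_le_norm _) (habsle j)
    have hsum_re : ∑ j, (σ (D j) ^ 2).re = ∑ j, d j ^ 2 := by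
      have h : (∑ j, σ (D j) ^ 2).re = ((m:ℝ):ℂ).re := by rw [hsums]
      rw [Complex.re_sum] at h
      rw [h, hm]
      simp
    have heach : ∀ j ∈ Finset.univ, d j ^ 2 - (σ (D j) ^ 2).re = 0 := by
      refine (Finset.sum_eq_zero_iff_of_nonneg fun j _ => by linarith [hrle j]).1 ?_
      rw [Finset.sum_sub_distrib, hsum_re, sub_self]
    have h3 : (σ (D i) ^ 2).re = d i ^ 2 := by
      have := heach i (Finset.mem_univ i); linarith
    have habseq : ‖σ (D i) ^ 2‖ = (σ (D i) ^ 2).re :=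
      le_antisymm (by rw [h3]; exact habsle i) (Complex.re_le_norm _)
    have him : (σ (D i) ^ 2).im = 0 := by
      have h4 := Complex.sq_norm (σ (D i) ^ 2)
      rw [habseq, Complex.normSq_apply] at h4
      nlinarith
    refine Complex.ext ?_ ?_
    · rw [h3, Complex.ofReal_re]
    · rw [him, Complex.ofReal_im]
  -- rationality of `d i ^ 2`
  have hrat2 : ∀ i, ∃ q : ℚ, d i ^ 2 = (q : ℝ) := by
    intro i
    obtain ⟨q, hq⟩ := rat_of_fixed K (D i ^ 2) (fun σ => by
      rw [map_pow, hfix2 σ i]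
      norm_cast)
    refine ⟨q, ?_⟩
    rw [← hq]
    norm_cast
  -- signs
  have hsign : ∀ (σ : K →ₐ[ℚ] ℂ) i, σ (D i) = ((d i : ℝ) : ℂ) ∨ σ (D i) = -((d i : ℝ) : ℂ) := by
    intro σ i
    have h := hfix2 σ i
    have h2 : (σ (D i) - ((d i:ℝ):ℂ)) * (σ (D i) + ((d i:ℝ):ℂ)) = 0 := by
      have h3 : ((d i ^ 2 : ℝ) : ℂ) = ((d i:ℝ):ℂ) ^ 2 := by push_cast; ring
      rw [h3] at h
      linear_combination h
    rcases mul_eq_zero.1 h2 with h' | h'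
    · left; exact sub_eq_zero.1 h'
    · right; exact eq_neg_of_add_eq_zero_left h'
  -- triple products are fixed
  have htriple : ∀ i j k, 0 < c i j k → ∀ (σ : K →ₐ[ℚ] ℂ),
      σ (D i * D j * D k) = ((d i * d j * d k : ℝ) : ℂ) := by
    intro i j k hcijk σ
    set r : ι → ℝ := fun l => if σ (D l) = ((d l:ℝ):ℂ) then d l else -(d l) with hrdef
    have hrl : ∀ l, σ (D l) = ((r l : ℝ) : ℂ) := by
      intro l
      by_cases hcase : σ (D l) = ((d l:ℝ):ℂ)
      · rw [hcase]; simp [hrdef, hcase]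
      · rcases hsign σ l with h' | h'
        · exact absurd h' hcase
        · rw [h']; simp [hrdef, hcase]
    have hrpm : ∀ l, r l = d l ∨ r l = -(d l) := by
      intro l
      by_cases hcase : σ (D l) = ((d l:ℝ):ℂ)
      · left; simp [hrdef, hcase]
      · right; simp [hrdef, hcase]
    -- the real relation
    have hmulr : r i * r j = ∑ l, (c i j l : ℝ) * r l := by
      have h := congrArg σ (hmulK i j)
      rw [map_mul, map_sum] at h
      simp only [map_mul, map_intCast, hrl] at h
      have h2 : (((r i * r j : ℝ)) : ℂ) = ((∑ l, (c i j l : ℝ) * r l : ℝ) : ℂ) := by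
        push_cast
        convert h using 2
      exact_mod_cast h2
    have hcast : ∀ l, ((c i j l : ℤ) : ℝ) ≥ 0 := fun l => by exact_mod_cast hc i j l
    have hrle : ∀ l, r l ≤ d l := by
      intro l
      rcases hrpm l with h' | h' <;> rw [h'] <;> linarith [hd l]
    have hrge : ∀ l, -(d l) ≤ r l := by
      intro l
      rcases hrpm l with h' | h' <;> rw [h'] <;> linarith [hd l]
    have hij : r i * r j = d i * d j ∨ r i * r j = -(d i * d j) := by
      rcases hrpm i with hi | hi <;> rcases hrpm j with hj | hj <;> rw [hi, hj] <;>
        [left; right; right; left] <;> ring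
    have hcposR : (0:ℝ) < (c i j k : ℝ) := by exact_mod_cast hcijk
    have hrk : r i * r j * r k = d i * d j * d k := by
      rcases hij with hpp | hpm
      · have hzero : ∑ l, (c i j l : ℝ) * (d l - r l) = 0 := by
          calc ∑ l, (c i j l : ℝ) * (d l - r l)
              = (∑ l, (c i j l : ℝ) * d l) - ∑ l, (c i j l : ℝ) * r l := by
                rw [← Finset.sum_sub_distrib]; congr 1; funext l; ring
            _ = d i * d j - (r i * r j) := by rw [← hmul i j, ← hmulr]
            _ = 0 := by rw [hpp, sub_self]
        have hterm := (Finset.sum_eq_zero_iff_of_nonneg fun l _ =>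
          mul_nonneg (hcast l) (by linarith [hrle l])).1 hzero k (Finset.mem_univ k)
        have hk : r k = d k := by
          rcases mul_eq_zero.1 hterm with h' | h'
          · exact absurd h' (ne_of_gt hcposR)
          · linarith
        rw [hpp, hk]
      · have hzero : ∑ l, (c i j l : ℝ) * (d l + r l) = 0 := by
          calc ∑ l, (c i j l : ℝ) * (d l + r l)
              = (∑ l, (c i j l : ℝ) * d l) + ∑ l, (c i j l : ℝ) * r l := by
                rw [← Finset.sum_add_distrib]; congr 1; funext l; ring
            _ = d i * d j + (r i * r j) := by rw [← hmul i j, ← hmulr]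
            _ = 0 := by rw [hpm]; ring
        have hterm := (Finset.sum_eq_zero_iff_of_nonneg fun l _ =>
          mul_nonneg (hcast l) (by linarith [hrge l])).1 hzero k (Finset.mem_univ k)
        have hk : r k = -(d k) := by
          rcases mul_eq_zero.1 hterm with h' | h'
          · exact absurd h' (ne_of_gt hcposR)
          · linarith
        rw [hpm, hk]
        ring
    rw [map_mul, map_mul]
    rw [hrl i, hrl j, hrl k]
    rw [← hrk]
    push_cast
    ring
  have hrat3 : ∀ i j k, 0 < c i j k → ∃ q : ℚ, d i * d j * d k = (q : ℝ) := by
    intro i j k h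
    obtain ⟨q, hq⟩ := rat_of_fixed K (D i * D j * D k) (fun σ => by
      rw [htriple i j k h σ]
      norm_cast)
    refine ⟨q, ?_⟩
    rw [← hq]
    norm_cast
  exact ⟨hdint, hrat2, hrat3⟩


/-- A positive real which is integral over `ℤ` and rational is a positive natural number. -/
lemma real_pos_nat_of_rat {x : ℝ} (hx : 0 < x) (hxint : IsIntegral ℤ x) {q : ℚ}
    (hq : x = (q : ℝ)) : ∃ N : ℕ, 0 < N ∧ x = (N : ℝ) := by
  have h1 : algebraMap ℚ ℝ q = x := by rw [eq_ratCast (algebraMap ℚ ℝ) q, hq]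
  have h2 : IsIntegral ℤ q := by
    rw [← isIntegral_algebraMap_iff (R := ℤ) (algebraMap ℚ ℝ).injective, h1]
    exact hxint
  obtain ⟨z, hz⟩ := IsIntegrallyClosed.isIntegral_iff.1 h2
  have hzq : (z : ℚ) = q := by rw [← hz, eq_intCast]
  have hq0 : 0 < q := by
    have : (0:ℝ) < (q:ℝ) := hq ▸ hx
    exact_mod_cast this
  have hz0 : 0 < z := by exact_mod_cast hzq ▸ hq0
  refine ⟨z.toNat, by omega, ?_⟩
  rw [hq, ← hzq]
  norm_cast
  omega


/-- Let `R` be a based ring whose Frobenius–Perron dimension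
`FPdim(R) = Σ_i FPdim(X_i)²` is an integer, where `FPdim = f` is the (unique)
ring homomorphism `R → ℝ` positive on basic elements. Then `FPdim(X)²` is a
positive integer for every basic `X`, and there is a function `sq` assigning to
each basic element the squarefree part of `FPdim(X)²` such that: `sq` is
squarefree-valued, `FPdim(X)² = m² · sq(X)` for some positive integer `m`,
`sq(1) = 1`, `sq(X*) = sq(X)`, and for every basic `Z` contained in `XY` the
squarefree part of `sq(X)·sq(Y)` is `sq(Z)`. Moreover the partition of the
basis by the value of `sq` is a faithful grading by an elementary abelian
`2`-group `E` (realized by a surjective `e : ι → E` whose fibers are the level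
sets of `sq`). -/
theorem integer_FPdim_grading {ι R : Type*} [Fintype ι] [DecidableEq ι]
    [Ring R] (BR : BasedRing ι R) (f : R →+* ℝ) (hf : ∀ i, 0 < f (BR.b i))
    (hint : ∃ m : ℤ, (∑ i : ι, (f (BR.b i)) ^ 2) = (m : ℝ)) :
    (∀ i, ∃ N : ℕ, 0 < N ∧ (f (BR.b i)) ^ 2 = (N : ℝ)) ∧
    ∃ sq : ι → ℕ,
      (∀ i, Squarefree (sq i)) ∧
      (∀ i, ∃ m : ℕ, 0 < m ∧ (f (BR.b i)) ^ 2 = ((m ^ 2 * sq i : ℕ) : ℝ)) ∧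
      sq BR.unit = 1 ∧
      (∀ i, sq (BR.star i) = sq i) ∧
      (∀ i j k, BR.contains (BR.b i * BR.b j) k →
        ∃ m : ℕ, 0 < m ∧ sq i * sq j = m ^ 2 * sq k) ∧
      ∃ (E : Type) (_ : CommGroup E) (e : ι → E),
        Function.Surjective e ∧
        (∀ x : E, x * x = 1) ∧
        (∀ i j, e i = e j ↔ sq i = sq j) ∧
        e BR.unit = 1 ∧
        (∀ i j k, BR.contains (BR.b i * BR.b j) k → e k = e i * e j) := by
  classical
  set d : ι → ℝ := fun i => f (BR.b i) with hd_def
  set c : ι → ι → ι → ℤ := fun i j k => BR.b.repr (BR.b i * BR.b j) k with hc_def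
  have hdu : d BR.unit = 1 := by
    simp only [hd_def, BR.b_unit, map_one]
  have hmul : ∀ i j, d i * d j = ∑ k, (c i j k : ℝ) * d k := by
    intro i j
    have hx : ∑ k, BR.b.repr (BR.b i * BR.b j) k • BR.b k = BR.b i * BR.b j :=
      BR.b.sum_repr (BR.b i * BR.b j)
    calc d i * d j = f (BR.b i * BR.b j) := (map_mul f _ _).symm
      _ = f (∑ k, BR.b.repr (BR.b i * BR.b j) k • BR.b k) := by rw [hx]
      _ = ∑ k, (c i j k : ℝ) * d k := by
          rw [map_sum]
          congr 1; funext k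
          rw [map_zsmul, zsmul_eq_mul]
  obtain ⟨hdint, hrat2, hrat3⟩ := key_galois d c BR.unit hf hdu BR.c_nonneg hmul hint
  -- each `d i ^ 2` is a positive natural
  have hN : ∀ i, ∃ N : ℕ, 0 < N ∧ d i ^ 2 = (N : ℝ) := by
    intro i
    obtain ⟨q, hq⟩ := hrat2 i
    exact real_pos_nat_of_rat (pow_pos (hf i) 2) ((hdint i).pow 2) hq
  choose N hNpos hNeq using hN
  -- squarefree parts
  set sq : ι → ℕ := fun i => sqp (N i) with hsq_def
  have hsq_sf : ∀ i, Squarefree (sq i) := fun i => sqp_squarefree (N i)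
  have hsq_pos : ∀ i, 0 < sq i := fun i => Nat.pos_of_ne_zero (hsq_sf i).ne_zero
  choose g hgpos hgeq using fun i => sqp_exists_pos (hNpos i)
  -- d (star i) = d i
  have hS : (0:ℝ) < ∑ j, d j ^ 2 := by
    refine Finset.sum_pos (fun j _ => pow_pos (hf j) 2) ⟨BR.unit, Finset.mem_univ _⟩
  have hds : ∀ i, d (BR.star i) = d i := by
    intro i
    have key : d i * (∑ j, d j ^ 2) = d (BR.star i) * (∑ j, d j ^ 2) := by
      calc d i * (∑ j, d j ^ 2) = ∑ j, (d i * d j) * d j := by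
            rw [Finset.mul_sum]; congr 1; funext j; ring
        _ = ∑ j, (∑ k, (c i j k : ℝ) * d k) * d j := by
            congr 1; funext j; rw [hmul i j]
        _ = ∑ j, ∑ k, ((c i j k : ℝ) * d k) * d j := by
            congr 1; funext j; rw [Finset.sum_mul]
        _ = ∑ k, ∑ j, ((c i j k : ℝ) * d k) * d j := Finset.sum_comm
        _ = ∑ k, (∑ j, (c (BR.star i) k j : ℝ) * d j) * d k := by
            congr 1; funext k
            rw [Finset.sum_mul]
            congr 1; funext j
            have : c i j k = c (BR.star i) k j := BR.adj_left i j k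
            rw [this]; ring
        _ = ∑ k, (d (BR.star i) * d k) * d k := by
            congr 1; funext k; rw [← hmul (BR.star i) k]
        _ = d (BR.star i) * (∑ j, d j ^ 2) := by
            rw [Finset.mul_sum]; congr 1; funext k; ring
    exact (mul_right_cancel₀ (ne_of_gt hS) key.symm)
  have hNs : ∀ i, N (BR.star i) = N i := by
    intro i
    have : ((N (BR.star i) : ℕ) : ℝ) = ((N i : ℕ) : ℝ) := by
      rw [← hNeq, ← hNeq, hds]
    exact_mod_cast this
  -- existence of contained element
  have hexists : ∀ i j, ∃ k, 0 < c i j k := by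
    intro i j
    by_contra hcon
    push_neg at hcon
    have hzero : ∀ k, c i j k = 0 := fun k => le_antisymm (hcon k) (BR.c_nonneg i j k)
    have : d i * d j = 0 := by
      rw [hmul i j]
      exact Finset.sum_eq_zero fun k _ => by rw [hzero k]; simp
    nlinarith [hf i, hf j]
  -- triple products: N i * N j * N k is a perfect square when c i j k > 0
  have htripleN : ∀ i j k, 0 < c i j k → ∃ r : ℕ, N i * N j * N k = r ^ 2 := by
    intro i j k hc
    obtain ⟨q, hq⟩ := hrat3 i j k hc
    have hpos : (0:ℝ) < d i * d j * d k := mul_pos (mul_pos (hf i) (hf j)) (hf k)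
    have hint3 : IsIntegral ℤ (d i * d j * d k) := ((hdint i).mul (hdint j)).mul (hdint k)
    obtain ⟨r, -, hr⟩ := real_pos_nat_of_rat hpos hint3 hq
    refine ⟨r, ?_⟩
    have : ((N i * N j * N k : ℕ) : ℝ) = ((r ^ 2 : ℕ) : ℝ) := by
      push_cast
      rw [← hNeq, ← hNeq, ← hNeq, ← hr]
      ring
    exact_mod_cast this
  -- the grading relation
  have hgrade : ∀ i j k, 0 < c i j k → ∃ m : ℕ, 0 < m ∧ sq i * sq j = m ^ 2 * sq k := by
    intro i j k hc
    obtain ⟨r, hr⟩ := htripleN i j k hc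
    obtain ⟨w, hw, hwsf⟩ := sqp_spec (sq i * sq j)
    have hw0 : 0 < w := by
      rcases Nat.eq_zero_or_pos w with rfl | h
      · rw [pow_two, Nat.zero_mul, Nat.zero_mul] at hw
        have := mul_pos (hsq_pos i) (hsq_pos j)
        omega
      · exact h
    -- `w ^ 2 * sqp (sq i * sq j) = sq i * sq j`
    have hgeq' : ∀ l, g l ^ 2 * sq l = N l := hgeq
    have hkey : sqp (sq i * sq j) * sq k * (w * (g i * g j * g k)) ^ 2 = r ^ 2 := by
      calc sqp (sq i * sq j) * sq k * (w * (g i * g j * g k)) ^ 2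
          = (w ^ 2 * sqp (sq i * sq j)) * ((g i)^2 * (g j)^2 * (g k)^2 * sq k) := by ring
        _ = (sq i * sq j) * ((g i)^2 * (g j)^2 * (g k)^2 * sq k) := by rw [hw]
        _ = ((g i)^2 * sq i) * ((g j)^2 * sq j) * ((g k)^2 * sq k) := by ring
        _ = N i * N j * N k := by rw [hgeq' i, hgeq' j, hgeq' k]
        _ = r ^ 2 := hr
    have hweq : sqp (sq i * sq j) = sq k :=
      squarefree_eq_of_mul_mul_sq hwsf (hsq_sf k)
        (Nat.mul_ne_zero hw0.ne' (Nat.mul_ne_zero (Nat.mul_ne_zero (hgpos i).ne' (hgpos j).ne') (hgpos k).ne')) hkey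
    refine ⟨w, hw0, ?_⟩
    rw [← hw, hweq]
  have hsqp_eq : ∀ i j k, 0 < c i j k → sqp (sq i * sq j) = sq k := by
    intro i j k hc
    obtain ⟨m, hm, hmeq⟩ := hgrade i j k hc
    exact sqp_eq (mul_pos (hsq_pos i) (hsq_pos j)) (hsq_sf k) hmeq.symm
  have hsq_unit : sq BR.unit = 1 := by
    have hN1 : N BR.unit = 1 := by
      have : ((N BR.unit : ℕ) : ℝ) = 1 := by rw [← hNeq, hdu]; norm_num
      exact_mod_cast this
    rw [hsq_def]
    simp only [hN1]
    exact sqp_eq (m := 1) one_pos squarefree_one (by norm_num)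
  refine ⟨fun i => ⟨N i, hNpos i, hNeq i⟩, sq, hsq_sf, ?_, hsq_unit, ?_, ?_, ?_⟩
  · intro i
    refine ⟨g i, hgpos i, ?_⟩
    have hgeq2 : g i ^ 2 * sq i = N i := hgeq i
    rw [hNeq i, ← hgeq2]
  · intro i
    rw [hsq_def]
    simp only [hNs]
  · intro i j k hk
    exact hgrade i j k hk
  -- the group
  · set E := {s : ℕ // ∃ i, sq i = s} with hE_def
    have hEsf : ∀ x : E, Squarefree x.1 := by rintro ⟨s, i, rfl⟩; exact hsq_sf i
    have hEpos : ∀ x : E, 0 < x.1 := by rintro ⟨s, i, rfl⟩; exact hsq_pos i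
    have hclosed : ∀ x y : E, ∃ i, sq i = sqp (x.1 * y.1) := by
      rintro ⟨s, i, rfl⟩ ⟨t, j, rfl⟩
      obtain ⟨k, hk⟩ := hexists i j
      exact ⟨k, (hsqp_eq i j k hk).symm⟩
    let emul : E → E → E := fun x y => ⟨sqp (x.1 * y.1), hclosed x y⟩
    have hsqp_self : ∀ a : ℕ, 0 < a → sqp (a * a) = 1 := by
      intro a ha
      exact sqp_eq (by positivity) squarefree_one (by ring)
    have hsqp_sq_mul : ∀ (gg a : ℕ), 0 < a → 0 < gg → sqp (gg ^ 2 * a) = sqp a := by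
      intro gg a ha hgg
      obtain ⟨b, hb, hba⟩ := sqp_exists_pos ha
      exact sqp_eq (by positivity) (sqp_squarefree a)
        (m := gg * b) (by rw [mul_pow]; rw [mul_assoc, hba])
    have hassoc : ∀ x y z : E, emul (emul x y) z = emul x (emul y z) := by
      rintro x y z
      apply Subtype.ext
      show sqp (sqp (x.1 * y.1) * z.1) = sqp (x.1 * sqp (y.1 * z.1))
      obtain ⟨b1, hb1, he1⟩ := sqp_exists_pos (mul_pos (hEpos x) (hEpos y))
      obtain ⟨b2, hb2, he2⟩ := sqp_exists_pos (mul_pos (hEpos y) (hEpos z))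
      have hsqp_pos : ∀ a : ℕ, 0 < sqp a := fun a =>
        Nat.pos_of_ne_zero (sqp_squarefree a).ne_zero
      have h1 : sqp (sqp (x.1 * y.1) * z.1) = sqp (x.1 * y.1 * z.1) := by
        conv_rhs => rw [← he1, mul_assoc]
        rw [hsqp_sq_mul b1 _ (mul_pos (hsqp_pos _) (hEpos z)) hb1]
      have h2 : sqp (x.1 * sqp (y.1 * z.1)) = sqp (x.1 * (y.1 * z.1)) := by
        conv_rhs => rw [← he2]
        rw [show x.1 * (b2 ^ 2 * sqp (y.1 * z.1))
            = b2 ^ 2 * (x.1 * sqp (y.1 * z.1)) from by ring,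
          hsqp_sq_mul b2 _ (mul_pos (hEpos x) (hsqp_pos _)) hb2]
      rw [h1, h2, mul_assoc]
    have hsqp_of_sf : ∀ a : ℕ, Squarefree a → sqp a = a := by
      intro a ha
      exact sqp_eq (m := 1) (Nat.pos_of_ne_zero ha.ne_zero) ha (by rw [one_pow, one_mul])
    let eone : E := ⟨1, BR.unit, hsq_unit⟩
    have honemul : ∀ x : E, emul eone x = x := by
      intro x
      apply Subtype.ext
      show sqp (1 * x.1) = x.1
      rw [one_mul]
      exact hsqp_of_sf x.1 (hEsf x)
    have hcomm : ∀ x y : E, emul x y = emul y x := by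
      intro x y
      apply Subtype.ext
      show sqp (x.1 * y.1) = sqp (y.1 * x.1)
      rw [mul_comm]
    have hselfinv : ∀ x : E, emul x x = eone := by
      intro x
      apply Subtype.ext
      exact hsqp_self x.1 (hEpos x)
    let inst : CommGroup E :=
      { mul := emul
        one := eone
        inv := id
        mul_assoc := hassoc
        one_mul := honemul
        mul_one := fun x => (hcomm x eone).trans (honemul x)
        inv_mul_cancel := fun x => hselfinv x
        mul_comm := hcomm }
    refine ⟨E, inst, fun i => ⟨sq i, i, rfl⟩, ?_, ?_, ?_, ?_, ?_⟩
    · rintro ⟨s, i, rfl⟩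
      exact ⟨i, rfl⟩
    · intro x
      exact hselfinv x
    · intro i j
      constructor
      · intro h; exact congrArg Subtype.val h
      · intro h; exact Subtype.ext h
    · exact Subtype.ext hsq_unit
    · intro i j k hk
      refine Subtype.ext ?_
      exact (hsqp_eq i j k hk).symm
end

section
/- Let R be a based ring such that FPdim(R) is an odd integer. Then FPdim(X) is an integer for every basic element X of R. (In particular, a fusion category of odd integer Frobenius–Perron dimension has all its objects of integer Frobenius–Perron dimension.) -/
open Polynomial IntermediateField Finset

/-- If an element of an algebraic extension of `ℚ` has the same image under every
embedding into `ℂ`, then it is rational. -/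
private lemma fixedval_rat {E : Type*} [Field E] [Algebra ℚ E] [Algebra.IsAlgebraic ℚ E]
    (α : E) (c : ℂ) (hc : ∀ φ : E →ₐ[ℚ] ℂ, φ α = c) :
    ∃ q : ℚ, algebraMap ℚ E q = α := by
  have hint : IsIntegral ℚ α := (Algebra.IsAlgebraic.isAlgebraic α).isIntegral
  have hK' : ∀ s : E, IsIntegral ℚ s ∧ ((minpoly ℚ s).map (algebraMap ℚ ℂ)).Splits := fun s =>
    ⟨(Algebra.IsAlgebraic.isAlgebraic s).isIntegral, IsAlgClosed.splits _⟩
  have hsub : ((minpoly ℚ α).rootSet ℂ) ⊆ {c} := by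
    intro y hy
    rw [Polynomial.mem_rootSet] at hy
    obtain ⟨φ, hφ⟩ := IntermediateField.exists_algHom_of_splits_of_aeval hK' hy.2
    have : y = c := by rw [← hφ, hc φ]
    simpa [Set.mem_singleton_iff] using this
  haveI hss : Subsingleton ((minpoly ℚ α).rootSet ℂ) := by
    refine ⟨fun x y => Subtype.ext ?_⟩
    have hx := hsub x.2
    have hy := hsub y.2
    simp only [Set.mem_singleton_iff] at hx hy
    rw [hx, hy]
  have hcard := Polynomial.card_rootSet_eq_natDegree (K := ℂ)
      (minpoly.irreducible hint).separable (IsAlgClosed.splits ((minpoly ℚ α).map (algebraMap ℚ ℂ)))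
  have hle : (minpoly ℚ α).natDegree ≤ 1 := by
    rw [← hcard]
    exact Fintype.card_le_one_iff_subsingleton.mpr hss
  have hge := minpoly.natDegree_pos hint
  obtain ⟨q, hq⟩ := minpoly.natDegree_eq_one_iff.mp (le_antisymm hle hge)
  exact ⟨q, hq⟩

/-- Frobenius–Perron bound: any "character" of the fusion ring with values in `ℂ`
is bounded on basic elements by the FP dimension (of the dual). -/
private lemma char_bound {ι : Type*} [Fintype ι] [DecidableEq ι]
    (d : ι → ℝ) (c : ι → ι → ι → ℤ) (u : ι) (st : ι → ι)
    (hd : ∀ i, 0 < d i) (hdu : d u = 1)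
    (hc : ∀ i j k, 0 ≤ c i j k)
    (hmul : ∀ i j, d i * d j = ∑ k, (c i j k : ℝ) * d k)
    (hadj : ∀ i j k, c i j k = c (st i) k j)
    (e : ι → ℂ) (heu : e u = 1)
    (hemul : ∀ i j, e i * e j = ∑ k, (c i j k : ℂ) * e k)
    (j : ι) : ‖e j‖ ≤ d (st j) := by
  set S := ∑ k, d k * ‖e k‖ with hS
  have hSpos : 0 < S := by
    have h1 : d u * ‖e u‖ ≤ S :=
      Finset.single_le_sum
        (fun i _ => mul_nonneg (hd i).le (norm_nonneg _)) (Finset.mem_univ u)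
    rw [heu, hdu] at h1
    simp only [norm_one, mul_one] at h1
    exact lt_of_lt_of_le one_pos h1
  have habs : ∀ i k l, ‖(c i k l : ℂ)‖ = (c i k l : ℝ) := by
    intro i k l
    rw [Complex.norm_intCast]
    exact_mod_cast abs_of_nonneg (hc i k l)
  have step1 : ∀ k, ‖e j‖ * ‖e k‖
      ≤ ∑ i, (c j k i : ℝ) * ‖e i‖ := by
    intro k
    rw [← norm_mul, hemul]
    refine le_trans (norm_sum_le _ _) (le_of_eq ?_)
    refine Finset.sum_congr rfl fun i _ => ?_
    rw [norm_mul, habs]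
  have swap : ∑ k, d k * ∑ i, (c j k i : ℝ) * ‖e i‖ = d (st j) * S := by
    simp_rw [Finset.mul_sum]
    rw [Finset.sum_comm]
    have hinner : ∀ i, ∑ k, d k * ((c j k i : ℝ) * ‖e i‖)
        = ‖e i‖ * (d (st j) * d i) := by
      intro i
      rw [hmul (st j) i, Finset.mul_sum]
      refine Finset.sum_congr rfl fun k _ => ?_
      rw [hadj j k i]
      ring
    simp_rw [hinner]
    rw [hS, Finset.mul_sum]
    exact Finset.sum_congr rfl fun i _ => by ring
  have step2 : ‖e j‖ * S ≤ d (st j) * S := by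
    calc ‖e j‖ * S = ∑ k, d k * (‖e j‖ * ‖e k‖) := by
          rw [hS, Finset.mul_sum]
          exact Finset.sum_congr rfl fun k _ => by ring
      _ ≤ ∑ k, d k * ∑ i, (c j k i : ℝ) * ‖e i‖ :=
          Finset.sum_le_sum fun k _ => mul_le_mul_of_nonneg_left (step1 k) (hd k).le
      _ = d (st j) * S := swap
  exact le_of_mul_le_mul_right step2 hSpos

/-- Orthogonality: a character different from the FP character is orthogonal to it. -/
private lemma char_orth {ι : Type*} [Fintype ι] [DecidableEq ι]
    (d : ι → ℝ) (c : ι → ι → ι → ℤ) (st : ι → ι)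
    (hmul : ∀ i j, d i * d j = ∑ k, (c i j k : ℝ) * d k)
    (hadj : ∀ i j k, c i j k = c (st i) k j)
    (hdst : ∀ i, d (st i) = d i)
    (e : ι → ℂ)
    (hemul : ∀ i j, e i * e j = ∑ k, (c i j k : ℂ) * e k)
    (j : ι) (hne : e j ≠ ((d j : ℝ) : ℂ)) :
    ∑ i, ((d i : ℝ) : ℂ) * e i = 0 := by
  set T := ∑ i, ((d i : ℝ) : ℂ) * e i with hT
  have key : e j * T = ((d j : ℝ) : ℂ) * T := by
    have hc1 : ∀ i, (∑ k, (c j k i : ℂ) * ((d k : ℝ) : ℂ)) = (((d j * d i : ℝ)) : ℂ) := by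
      intro i
      have hr : ∑ k, (c j k i : ℝ) * d k = d j * d i := by
        have : ∀ k, (c j k i : ℝ) = (c (st j) i k : ℝ) := fun k => by rw [hadj j k i]
        simp_rw [this]
        rw [← hmul (st j) i, hdst j]
      calc (∑ k, (c j k i : ℂ) * ((d k : ℝ) : ℂ))
          = ((∑ k, (c j k i : ℝ) * d k : ℝ) : ℂ) := by push_cast; ring
        _ = (((d j * d i : ℝ)) : ℂ) := by rw [hr]
    calc e j * T = ∑ i, ((d i : ℝ) : ℂ) * (e j * e i) := by
          rw [hT, Finset.mul_sum]
          exact Finset.sum_congr rfl fun i _ => by ring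
      _ = ∑ i, ((d i : ℝ) : ℂ) * ∑ k, (c j i k : ℂ) * e k := by
          simp_rw [hemul]
      _ = ∑ k, (∑ i, (c j i k : ℂ) * ((d i : ℝ) : ℂ)) * e k := by
          simp_rw [Finset.mul_sum, Finset.sum_mul]
          rw [Finset.sum_comm]
          exact Finset.sum_congr rfl fun k _ => Finset.sum_congr rfl fun i _ => by ring
      _ = ∑ k, (((d j * d k : ℝ)) : ℂ) * e k := by
          exact Finset.sum_congr rfl fun k _ => by rw [hc1 k]
      _ = ((d j : ℝ) : ℂ) * T := by
          rw [hT, Finset.mul_sum]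
          refine Finset.sum_congr rfl fun k _ => ?_
          push_cast
          ring
  have hz : (e j - ((d j : ℝ) : ℂ)) * T = 0 := by rw [sub_mul, key, sub_self]
  rcases mul_eq_zero.mp hz with h | h
  · exact absurd (sub_eq_zero.mp h) hne
  · exact h

set_option maxHeartbeats 1000000

/-- Let `R` be a based ring whose Frobenius–Perron dimension
`FPdim(R) = Σ_i FPdim(X_i)²` is an odd integer, where `FPdim = f` is the
(unique) ring homomorphism `R → ℝ` positive on basic elements. Then
`FPdim(X)` is an integer for every basic element `X` of `R`. -/
theorem odd_FPdim_integral {ι R : Type*} [Fintype ι] [DecidableEq ι]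
    [Ring R] (BR : BasedRing ι R) (f : R →+* ℝ) (hf : ∀ i, 0 < f (BR.b i))
    (hodd : ∃ m : ℤ, Odd m ∧ (∑ i : ι, (f (BR.b i)) ^ 2) = (m : ℝ)) :
    ∀ i, ∃ m : ℤ, f (BR.b i) = (m : ℝ) := by
  classical
  obtain ⟨m, hm_odd, hm⟩ := hodd
  set d : ι → ℝ := fun i => f (BR.b i) with hd_def
  set c : ι → ι → ι → ℤ := fun i j k => BR.b.repr (BR.b i * BR.b j) k with hc_def
  have hd : ∀ i, 0 < d i := hf
  have hdu : d BR.unit = 1 := by rw [hd_def]; simp [BR.b_unit]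
  have hc : ∀ i j k, 0 ≤ c i j k := BR.c_nonneg
  have hmul : ∀ i j, d i * d j = ∑ k, (c i j k : ℝ) * d k := by
    intro i j
    have hx : BR.b i * BR.b j = ∑ k, c i j k • BR.b k := (BR.b.sum_repr _).symm
    calc d i * d j = f (BR.b i * BR.b j) := (map_mul f _ _).symm
      _ = ∑ k, (c i j k : ℝ) * d k := by
          rw [hx, map_sum]
          exact Finset.sum_congr rfl fun k _ => by rw [map_zsmul, zsmul_eq_mul]
  have hadj : ∀ i j k, c i j k = c (BR.star i) k j := BR.adj_left
  have hst : ∀ i, BR.star (BR.star i) = i := BR.star_invol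
  -- the FP character itself, with complex values
  have hdC : ∀ i j, ((d i : ℝ) : ℂ) * ((d j : ℝ) : ℂ) = ∑ k, (c i j k : ℂ) * ((d k : ℝ) : ℂ) := by
    intro i j
    calc ((d i : ℝ) : ℂ) * ((d j : ℝ) : ℂ) = ((d i * d j : ℝ) : ℂ) := by push_cast; ring
      _ = ((∑ k, (c i j k : ℝ) * d k : ℝ) : ℂ) := by rw [hmul]
      _ = ∑ k, (c i j k : ℂ) * ((d k : ℝ) : ℂ) := by push_cast; ring
  have hduC : ((d BR.unit : ℝ) : ℂ) = 1 := by rw [hdu]; norm_num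
  -- the FP dimensions are star-invariant
  have hdst : ∀ j, d (BR.star j) = d j := by
    have hb : ∀ j, d j ≤ d (BR.star j) := by
      intro j
      have h := char_bound d c BR.unit BR.star hd hdu hc hmul hadj
        (fun i => ((d i : ℝ) : ℂ)) hduC hdC j
      rwa [Complex.norm_real, Real.norm_eq_abs, abs_of_pos (hd j)] at h
    intro j
    have h2 := hb (BR.star j)
    rw [hst j] at h2
    exact le_antisymm h2 (hb j)
  -- the FP dimensions are algebraic integers
  have hdint : ∀ i, IsIntegral ℤ (d i) := by
    set M : Submodule ℤ ℝ := Submodule.span ℤ (Set.range d) with hM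
    have hmem : ∀ i, d i ∈ M := fun i => Submodule.subset_span ⟨i, rfl⟩
    have h1M : (1 : ℝ) ∈ M := hdu ▸ hmem BR.unit
    have hgen : ∀ i j, d i * d j ∈ M := by
      intro i j
      rw [hmul i j]
      refine Submodule.sum_mem _ fun k _ => ?_
      have hz : (c i j k : ℝ) * d k = (c i j k : ℤ) • d k := by rw [zsmul_eq_mul]
      rw [hz]
      exact Submodule.smul_mem _ _ (hmem k)
    have hmulM : ∀ x ∈ M, ∀ y ∈ M, x * y ∈ M := by
      intro x hx y hy
      refine Submodule.span_induction₂ (p := fun x y _ _ => x * y ∈ M)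
        ?_ ?_ ?_ ?_ ?_ ?_ ?_ hx hy
      · rintro x y ⟨i, rfl⟩ ⟨j, rfl⟩; exact hgen i j
      · intro y _; rw [zero_mul]; exact M.zero_mem
      · intro x _; rw [mul_zero]; exact M.zero_mem
      · intro x y z _ _ _ h1 h2; rw [add_mul]; exact M.add_mem h1 h2
      · intro x y z _ _ _ h1 h2; rw [mul_add]; exact M.add_mem h1 h2
      · intro r x y _ _ h; rw [smul_mul_assoc]; exact M.smul_mem r h
      · intro r x y _ _ h; rw [mul_smul_comm]; exact M.smul_mem r h
    intro i
    refine IsIntegral.of_mem_of_fg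
      (M.toSubalgebra h1M (fun x y hx hy => hmulM x hx y hy)) ?_ _ (hmem i)
    exact Submodule.fg_span (Set.finite_range d)
  -- the number field generated by the FP dimensions
  set K : IntermediateField ℚ ℝ := IntermediateField.adjoin ℚ (Set.range d) with hKdef
  haveI halgK : Algebra.IsAlgebraic ℚ K :=
    IntermediateField.isAlgebraic_adjoin (fun x hx => by
      obtain ⟨i, rfl⟩ := hx
      exact (hdint i).tower_top)
  set D : ι → K := fun i => ⟨d i, IntermediateField.subset_adjoin ℚ _ ⟨i, rfl⟩⟩ with hD
  have hKmul : ∀ i j, D i * D j = ∑ k, (c i j k : ℤ) • D k := by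
    intro i j
    apply Subtype.val_injective
    have h2 : (↑(∑ k, (c i j k : ℤ) • D k) : ℝ) = ∑ k, (c i j k : ℝ) * d k := by
      rw [show ((↑(∑ k, (c i j k : ℤ) • D k) : ℝ)) = K.val (∑ k, (c i j k : ℤ) • D k) from rfl,
        map_sum]
      exact Finset.sum_congr rfl fun k _ => by rw [map_zsmul, zsmul_eq_mul]; rfl
    show d i * d j = _
    rw [h2, hmul]
  have hKone : D BR.unit = 1 := Subtype.val_injective hdu
  have hKsum : ∑ i, D i * D i = algebraMap ℚ K ((m : ℚ)) := by
    apply Subtype.val_injective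
    have h2 : (↑(∑ i, D i * D i) : ℝ) = ∑ i, d i * d i := by
      rw [show ((↑(∑ i, D i * D i) : ℝ)) = K.val (∑ i, D i * D i) from rfl, map_sum]
      exact Finset.sum_congr rfl fun i _ => rfl
    have h3 : (↑(algebraMap ℚ K ((m : ℚ))) : ℝ) = (m : ℝ) := by
      rw [show ((↑(algebraMap ℚ K ((m : ℚ))) : ℝ)) = K.val (algebraMap ℚ K ((m : ℚ))) from rfl]
      erw [AlgHom.commutes K.val]
      push_cast
      rfl
    rw [h2, h3, ← hm]
    exact Finset.sum_congr rfl fun i _ => (sq (d i)).symm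
  -- characters attached to embeddings
  have hφchar : ∀ (φ : K →ₐ[ℚ] ℂ) (i j : ι),
      φ (D i) * φ (D j) = ∑ k, (c i j k : ℂ) * φ (D k) := by
    intro φ i j
    rw [← map_mul, hKmul i j, map_sum]
    exact Finset.sum_congr rfl fun k _ => by rw [map_zsmul, zsmul_eq_mul]
  have hφu : ∀ φ : K →ₐ[ℚ] ℂ, φ (D BR.unit) = 1 := by
    intro φ
    rw [hKone, map_one]
  have hφsum : ∀ φ : K →ₐ[ℚ] ℂ, ∑ i, φ (D i) * φ (D i) = (m : ℂ) := by
    intro φ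
    have h := congrArg φ hKsum
    rw [map_sum, AlgHom.commutes] at h
    simp only [map_mul] at h
    rw [h]
    push_cast
    rfl
  have hφbound : ∀ (φ : K →ₐ[ℚ] ℂ) (j : ι), ‖φ (D j)‖ ≤ d j := by
    intro φ j
    have h := char_bound d c BR.unit BR.star hd hdu hc hmul hadj
      (fun i => φ (D i)) (hφu φ) (hφchar φ) j
    rwa [hdst j] at h
  -- the squares are fixed by every embedding
  have hφsq : ∀ (φ : K →ₐ[ℚ] ℂ) (i : ι), φ (D i) * φ (D i) = ((d i * d i : ℝ) : ℂ) := by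
    intro φ
    have hre : ∀ i, (φ (D i) * φ (D i)).re ≤ d i * d i := by
      intro i
      refine le_trans (Complex.re_le_norm _) ?_
      rw [norm_mul]
      exact mul_le_mul (hφbound φ i) (hφbound φ i) (norm_nonneg _) (hd i).le
    have hsumre : ∑ i, (φ (D i) * φ (D i)).re = ∑ i, d i * d i := by
      have h1 : (∑ i, φ (D i) * φ (D i)).re = (m : ℝ) := by
        rw [hφsum φ]
        simp
      rw [Complex.re_sum] at h1
      rw [h1, ← hm]
      exact Finset.sum_congr rfl fun i _ => sq (d i)
    have heq : ∀ i ∈ Finset.univ, (φ (D i) * φ (D i)).re = d i * d i :=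
      (Finset.sum_eq_sum_iff_of_le (fun i _ => hre i)).mp hsumre
    intro i
    have h1 : (φ (D i) * φ (D i)).re = d i * d i := heq i (Finset.mem_univ i)
    have h2 : ‖φ (D i) * φ (D i)‖ ≤ d i * d i := by
      rw [norm_mul]
      exact mul_le_mul (hφbound φ i) (hφbound φ i) (norm_nonneg _) (hd i).le
    have h3 : ‖φ (D i) * φ (D i)‖ = (φ (D i) * φ (D i)).re :=
      le_antisymm (h1 ▸ h2) (Complex.re_le_norm _)
    have h4 : (φ (D i) * φ (D i)).im = 0 := by
      have h5 := Complex.sq_norm (φ (D i) * φ (D i))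
      rw [h3, Complex.normSq_apply] at h5
      nlinarith [h5]
    apply Complex.ext
    · rw [h1]
      simp
    · rw [h4]
      simp
  -- the squares are rational integers
  have hnex : ∀ i, ∃ z : ℤ, (z : ℝ) = d i * d i := by
    intro i
    obtain ⟨q, hq⟩ := fixedval_rat (D i * D i) ((d i * d i : ℝ) : ℂ)
      (fun φ => by rw [map_mul]; exact hφsq φ i)
    have hq' : (q : ℝ) = d i * d i := by
      have h := congrArg Subtype.val hq
      rw [show ((algebraMap ℚ K q : K) : ℝ) = K.val (algebraMap ℚ K q) from rfl] at h
      erw [AlgHom.commutes K.val] at h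
      rw [show ((q : ℝ)) = algebraMap ℚ ℝ q from rfl, h]
      rfl
    have hqint : IsIntegral ℤ q := by
      have h1 : IsIntegral ℤ (d i * d i) := (hdint i).mul (hdint i)
      rw [← hq'] at h1
      rw [show ((q : ℝ)) = algebraMap ℚ ℝ q from rfl] at h1
      exact (isIntegral_algebraMap_iff (algebraMap ℚ ℝ).injective).mp h1
    obtain ⟨z, hz⟩ := IsIntegrallyClosed.isIntegral_iff.mp hqint
    refine ⟨z, ?_⟩
    rw [← hq', ← hz]
    push_cast
    rfl
  choose n hn using hnex
  have hmn : m = ∑ i, n i := by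
    have h1 : (m : ℝ) = ((∑ i, n i : ℤ) : ℝ) := by
      rw [← hm]
      push_cast
      exact Finset.sum_congr rfl fun i _ => by rw [sq, ← hn i]
    exact_mod_cast h1
  -- every embedding fixes every FP dimension
  have hfix : ∀ (φ : K →ₐ[ℚ] ℂ) (i : ι), φ (D i) = ((d i : ℝ) : ℂ) := by
    by_contra hcon
    push_neg at hcon
    obtain ⟨φ, j, hj⟩ := hcon
    have horth := char_orth d c BR.star hmul hadj hdst
      (fun i => φ (D i)) (hφchar φ) j hj
    have hpm : ∀ i, φ (D i) = ((d i : ℝ) : ℂ) ∨ φ (D i) = -((d i : ℝ) : ℂ) := by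
      intro i
      have h1 : φ (D i) * φ (D i) = ((d i : ℝ) : ℂ) * ((d i : ℝ) : ℂ) := by
        rw [hφsq φ i]
        push_cast
        ring
      exact mul_self_eq_mul_self_iff.mp h1
    have hnc : ∀ i, ((d i : ℝ) : ℂ) * ((d i : ℝ) : ℂ) = ((n i : ℤ) : ℂ) := by
      intro i
      calc ((d i : ℝ) : ℂ) * ((d i : ℝ) : ℂ) = ((d i * d i : ℝ) : ℂ) := by push_cast; ring
        _ = (((n i : ℤ) : ℝ) : ℂ) := by rw [hn i]
        _ = ((n i : ℤ) : ℂ) := by push_cast; rfl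
    set s : Finset ι := Finset.univ.filter (fun i => φ (D i) = ((d i : ℝ) : ℂ)) with hs
    set za : ℤ := ∑ i ∈ s, n i with hza
    set zb : ℤ := ∑ i ∈ sᶜ, n i with hzb
    have hAs : ∑ i ∈ s, ((d i : ℝ) : ℂ) * φ (D i) = ((za : ℤ) : ℂ) := by
      rw [hza, Int.cast_sum]
      refine Finset.sum_congr rfl fun i hi => ?_
      have hpi : φ (D i) = ((d i : ℝ) : ℂ) := by
        rw [hs] at hi
        exact (Finset.mem_filter.mp hi).2
      rw [hpi, hnc i]
    have hBs : ∑ i ∈ sᶜ, ((d i : ℝ) : ℂ) * φ (D i) = -((zb : ℤ) : ℂ) := by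
      rw [hzb, Int.cast_sum, ← Finset.sum_neg_distrib]
      refine Finset.sum_congr rfl fun i hi => ?_
      have hni : ¬ (φ (D i) = ((d i : ℝ) : ℂ)) := by
        have := Finset.mem_compl.mp hi
        rw [hs] at this
        simpa [Finset.mem_filter] using this
      have hpi := (hpm i).resolve_left hni
      rw [hpi, ← hnc i]
      ring
    have hzazb : za = zb := by
      have htot := Finset.sum_add_sum_compl s (fun i => ((d i : ℝ) : ℂ) * φ (D i))
      rw [hAs, hBs, horth] at htot
      have h4 : ((za : ℤ) : ℂ) = ((zb : ℤ) : ℂ) := by linear_combination htot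
      exact_mod_cast h4
    have hmsum : m = za + zb := by
      rw [hmn, hza, hzb]
      exact (Finset.sum_add_sum_compl s n).symm
    have : ¬ Odd m := by
      rw [hmsum, hzazb, Int.not_odd_iff_even]
      exact ⟨zb, rfl⟩
    exact this hm_odd
  -- conclude
  intro i
  obtain ⟨q, hq⟩ := fixedval_rat (D i) ((d i : ℝ) : ℂ) (fun φ => hfix φ i)
  have hq' : (q : ℝ) = d i := by
    have h := congrArg Subtype.val hq
    rw [show ((algebraMap ℚ K q : K) : ℝ) = K.val (algebraMap ℚ K q) from rfl] at h
    erw [AlgHom.commutes K.val] at h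
    rw [show ((q : ℝ)) = algebraMap ℚ ℝ q from rfl, h]
  have hqint : IsIntegral ℤ q := by
    have h1 := hdint i
    rw [← hq', show ((q : ℝ)) = algebraMap ℚ ℝ q from rfl] at h1
    exact (isIntegral_algebraMap_iff (algebraMap ℚ ℝ).injective).mp h1
  obtain ⟨z, hz⟩ := IsIntegrallyClosed.isIntegral_iff.mp hqint
  refine ⟨z, ?_⟩
  show d i = (z : ℝ)
  rw [← hq', ← hz]
  push_cast
  rfl
end

section
/- Let R be a commutative based ring and let S be a based subring of R. If basic elements Y₁, Y₂ of R satisfy Y₁Y₁* ∈ S and Y₂Y₂* ∈ S, then every basic element Y contained in Y₁Y₂ satisfies YY* ∈ S. Consequently, the ℤ-span of the set of basic elements Y with YY* ∈ S is itself a based subring of R (equal to the commutator S^co). -/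
namespace BasedRing

variable {ι R : Type*} [Fintype ι] [DecidableEq ι] [Ring R] (BR : BasedRing ι R)

/-- `C ⊆ ι` indexes a *based subring* of `R`: it contains the unit, is closed
under the involution, and every basic element contained in a product of two of
its elements again lies in it. -/
def IsBasedSubring (C : Set ι) : Prop :=
  BR.unit ∈ C ∧ (∀ i ∈ C, BR.star i ∈ C) ∧
    ∀ i ∈ C, ∀ j ∈ C, ∀ k, BR.contains (BR.b i * BR.b j) k → k ∈ C

theorem mem_spanOf_iff {C : Set ι} {x : R} :
    x ∈ BR.spanOf C ↔ ∀ m, m ∉ C → BR.b.repr x m = 0 := by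
  rw [spanOf, Module.Basis.mem_span_image]
  constructor
  · intro h m hm
    by_contra h0
    exact hm (h (Finsupp.mem_support_iff.mpr h0))
  · intro h m hm
    by_contra h0
    exact Finsupp.mem_support_iff.mp hm (h m h0)

theorem star_repr (i j k : ι) :
    BR.b.repr (BR.b (BR.star j) * BR.b (BR.star i)) (BR.star k)
      = BR.b.repr (BR.b i * BR.b j) k := by
  rw [BR.adj_right i j k, BR.adj_left k (BR.star j) i, BR.adj_right (BR.star k) i (BR.star j)]

theorem basic_mul_mem {C : Set ι} (hC : BR.IsBasedSubring C) {i j : ι}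
    (hi : i ∈ C) (hj : j ∈ C) : BR.b i * BR.b j ∈ BR.spanOf C := by
  rw [BR.mem_spanOf_iff]
  intro m hm
  by_contra h0
  exact hm (hC.2.2 i hi j hj m (lt_of_le_of_ne (BR.c_nonneg i j m) (Ne.symm h0)))

theorem mul_mem_spanOf {C : Set ι} (hC : BR.IsBasedSubring C) {x y : R}
    (hx : x ∈ BR.spanOf C) (hy : y ∈ BR.spanOf C) : x * y ∈ BR.spanOf C := by
  induction hx using Submodule.span_induction with
  | mem u hu =>
    induction hy using Submodule.span_induction with
    | mem v hv =>
      obtain ⟨i, hi, rfl⟩ := hu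
      obtain ⟨j, hj, rfl⟩ := hv
      exact BR.basic_mul_mem hC hi hj
    | zero => rw [mul_zero]; exact zero_mem _
    | add v w _ _ hv hw => rw [mul_add]; exact add_mem hv hw
    | smul a v _ hv => rw [mul_smul_comm]; exact Submodule.smul_mem _ a hv
  | zero => rw [zero_mul]; exact zero_mem _
  | add u w _ _ hu hw => rw [add_mul]; exact add_mem hu hw
  | smul a u _ hu => rw [smul_mul_assoc]; exact Submodule.smul_mem _ a hu

end BasedRing

/-- Let `R` be a commutative based ring and `S` a based subring
(spanned by the set of basic elements indexed by `C`). If basic elements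
`Y₁, Y₂` satisfy `Y₁Y₁* ∈ S` and `Y₂Y₂* ∈ S`, then every basic element `Y`
contained in `Y₁Y₂` satisfies `YY* ∈ S`. Consequently, the set of basic
elements `Y` with `YY* ∈ S` indexes a based subring of `R` (whose `ℤ`-span is
the commutator `S^co`). -/
theorem commutator_is_based_subring {ι R : Type*} [Fintype ι] [DecidableEq ι]
    [Ring R] (BR : BasedRing ι R) (hcomm : ∀ x y : R, x * y = y * x)
    (C : Set ι) (hC : BR.IsBasedSubring C) :
    (∀ j₁ j₂, BR.b j₁ * BR.b (BR.star j₁) ∈ BR.spanOf C →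
      BR.b j₂ * BR.b (BR.star j₂) ∈ BR.spanOf C →
      ∀ k, BR.contains (BR.b j₁ * BR.b j₂) k →
        BR.b k * BR.b (BR.star k) ∈ BR.spanOf C) ∧
    BR.IsBasedSubring {j | BR.b j * BR.b (BR.star j) ∈ BR.spanOf C} := by
  letI : CommRing R := { ‹Ring R› with mul_comm := hcomm }
  have main : ∀ j₁ j₂, BR.b j₁ * BR.b (BR.star j₁) ∈ BR.spanOf C →
      BR.b j₂ * BR.b (BR.star j₂) ∈ BR.spanOf C →
      ∀ k, BR.contains (BR.b j₁ * BR.b j₂) k →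
        BR.b k * BR.b (BR.star k) ∈ BR.spanOf C := by
    intro j₁ j₂ h1 h2 k hk
    set Z : R := BR.b j₁ * BR.b j₂ with hZ
    set Z' : R := BR.b (BR.star j₂) * BR.b (BR.star j₁) with hZ'
    have hZZ' : Z * Z' ∈ BR.spanOf C := by
      have : Z * Z' = (BR.b j₁ * BR.b (BR.star j₁)) * (BR.b j₂ * BR.b (BR.star j₂)) := by
        rw [hZ, hZ']; ring
      rw [this]
      exact BR.mul_mem_spanOf hC h1 h2
    -- expand Z * Z' in the basis
    have hrepr : ∀ m : ι, BR.b.repr (Z * Z') m =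
        ∑ p : ι × ι, (BR.b.repr Z p.1 * BR.b.repr Z' p.2) *
          BR.b.repr (BR.b p.1 * BR.b p.2) m := by
      intro m
      conv_lhs => rw [← BR.b.sum_repr Z, ← BR.b.sum_repr Z', Finset.sum_mul_sum]
      rw [Fintype.sum_prod_type]
      simp only [smul_mul_smul_comm, map_sum, map_smul, Finsupp.coe_finset_sum,
        Finset.sum_apply, Finsupp.smul_apply, smul_eq_mul, mul_assoc]
    rw [BR.mem_spanOf_iff]
    intro m hm
    have hmzero : BR.b.repr (Z * Z') m = 0 := (BR.mem_spanOf_iff.mp hZZ') m hm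
    rw [hrepr m] at hmzero
    have hnonneg : ∀ p ∈ (Finset.univ : Finset (ι × ι)),
        0 ≤ (BR.b.repr Z p.1 * BR.b.repr Z' p.2) * BR.b.repr (BR.b p.1 * BR.b p.2) m := by
      intro p _
      exact mul_nonneg (mul_nonneg (BR.c_nonneg _ _ _) (BR.c_nonneg _ _ _)) (BR.c_nonneg _ _ _)
    have hterm := (Finset.sum_eq_zero_iff_of_nonneg hnonneg).mp hmzero (k, BR.star k)
      (Finset.mem_univ _)
    have hZ'k : BR.b.repr Z' (BR.star k) = BR.b.repr Z k := BR.star_repr j₁ j₂ k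
    simp only [hZ'k] at hterm
    have hkpos : 0 < BR.b.repr Z k := hk
    rcases mul_eq_zero.mp hterm with h | h
    · exact absurd (mul_pos hkpos hkpos) (by rw [h]; exact lt_irrefl 0)
    · exact h
  refine ⟨main, ?_, ?_, ?_⟩
  · -- unit
    show BR.b BR.unit * BR.b (BR.star BR.unit) ∈ BR.spanOf C
    rw [BR.b_unit, one_mul, BR.mem_spanOf_iff]
    intro m hm
    have h := BR.adj_left BR.unit m BR.unit
    rw [BR.b_unit, one_mul, mul_one] at h
    rw [← h, BR.b.repr_self]
    exact Finsupp.single_eq_of_ne (fun he => hm (he ▸ hC.1))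
  · intro i hi
    show BR.b (BR.star i) * BR.b (BR.star (BR.star i)) ∈ BR.spanOf C
    rw [BR.star_invol, hcomm]
    exact hi
  · intro i hi j hj k hk
    exact main i j hi hj k hk
end

section
/- Let R be a nilpotent based ring, let M be an indecomposable based R-module with basis {V_j}_{j∈J}, and let (μ_j)_{j∈J} be positive real numbers such that Q = Σ_{j∈J} μ_j V_j satisfies X·Q = FPdim(X)·Q in M ⊗_ℤ ℝ for all X ∈ R. Then for every j ∈ J, the ratio (Σ_{k∈J} μ_k²)/μ_j² is an integer; i.e., FPdim(M)/FPdim(V_j)² ∈ ℤ for every basic element V_j of M. -/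
namespace BasedRing

variable {ι R : Type*} [Fintype ι] [DecidableEq ι] [Ring R] (BR : BasedRing ι R)

open Classical in
/-- The adjoint subring of the based subring spanned by `C`: the basic elements
contained in some power (`n ≥ 1`) of `Σ_{X basic in S} X X*`. -/
noncomputable def adOf (C : Finset ι) : Finset ι :=
  Finset.univ.filter fun k => ∃ n : ℕ, 1 ≤ n ∧
    BR.contains ((∑ i ∈ C, BR.b i * BR.b (BR.star i)) ^ n) k

/-- The upper central series: `R^(0) = R`, `R^(n) = (R^(n-1))_ad`
(for `C = Finset.univ`). -/
noncomputable def upperOf (C : Finset ι) : ℕ → Finset ι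
  | 0 => C
  | n + 1 => BR.adOf (upperOf C n)

end BasedRing

namespace FMD

variable {ι R : Type*} [Fintype ι] [DecidableEq ι] [Ring R] (BR : BasedRing ι R)

/-- structure constants -/
noncomputable def cc (i j k : ι) : ℤ := BR.b.repr (BR.b i * BR.b j) k

lemma cc_nonneg (i j k : ι) : 0 ≤ cc BR i j k := BR.c_nonneg i j k

lemma cc_adj_right (i j k : ι) : cc BR i j k = cc BR k (BR.star j) i := BR.adj_right i j k

lemma cc_adj_left (i j k : ι) : cc BR i j k = cc BR (BR.star i) k j := BR.adj_left i j k

lemma cc_antihom (i j k : ι) :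
    cc BR i j k = cc BR (BR.star j) (BR.star i) (BR.star k) := by
  rw [cc_adj_right, cc_adj_left, cc_adj_right]

lemma repr_basis (i k : ι) : BR.b.repr (BR.b i) k = if i = k then 1 else 0 :=
  BR.b.repr_self_apply i k

lemma star_unit : BR.star BR.unit = BR.unit := by
  have h := BR.adj_right BR.unit BR.unit BR.unit
  rw [BR.b_unit, one_mul, one_mul, ← BR.b_unit, repr_basis, repr_basis] at h
  simp only [if_pos rfl] at h
  by_contra hne
  rw [if_neg hne] at h
  exact one_ne_zero h

lemma cc_unit_left (j k : ι) : cc BR BR.unit j k = if j = k then 1 else 0 := by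
  rw [cc, BR.b_unit, one_mul, repr_basis]

lemma cc_unit_right (j k : ι) : cc BR j BR.unit k = if j = k then 1 else 0 := by
  rw [cc, BR.b_unit, mul_one, repr_basis]

lemma cc_star_self_unit (i : ι) : cc BR i (BR.star i) BR.unit = 1 := by
  rw [cc_adj_right, cc_unit_left, BR.star_invol, if_pos rfl]

lemma cc_star_self_unit' (i : ι) : cc BR (BR.star i) i BR.unit = 1 := by
  rw [cc_adj_right, cc_unit_left, if_pos rfl]

lemma repr_mul (x y : R) (k : ι) :
    BR.b.repr (x * y) k =
      ∑ a : ι, ∑ c : ι, BR.b.repr x a * BR.b.repr y c * cc BR a c k := by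
  conv_lhs => rw [← BR.b.sum_repr x, ← BR.b.sum_repr y]
  rw [Finset.sum_mul, map_sum, Finsupp.coe_finset_sum, Finset.sum_apply]
  refine Finset.sum_congr rfl fun a _ => ?_
  rw [Finset.mul_sum, map_sum, Finsupp.coe_finset_sum, Finset.sum_apply]
  refine Finset.sum_congr rfl fun c _ => ?_
  rw [smul_mul_smul_comm, map_smul, Finsupp.smul_apply, smul_eq_mul, cc, mul_assoc]

lemma repr_mul_nonneg {x y : R} (hx : ∀ a, 0 ≤ BR.b.repr x a)
    (hy : ∀ a, 0 ≤ BR.b.repr y a) (k : ι) : 0 ≤ BR.b.repr (x * y) k := by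
  rw [repr_mul]
  refine Finset.sum_nonneg fun a _ => Finset.sum_nonneg fun c _ => ?_
  exact mul_nonneg (mul_nonneg (hx a) (hy c)) (cc_nonneg BR a c k)


/-- helper: positive sum of integers has a positive term -/
lemma exists_pos_term {α : Type*} {s : Finset α} {f : α → ℤ}
    (h : 0 < ∑ a ∈ s, f a) : ∃ a ∈ s, 0 < f a := by
  by_contra hc
  push_neg at hc
  have : ∑ a ∈ s, f a ≤ 0 := Finset.sum_nonpos hc
  omega

lemma trip_pos {x y z : ℤ} (hx : 0 ≤ x) (hy : 0 ≤ y) (hz : 0 ≤ z)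
    (h : 0 < x * y * z) : 0 < x ∧ 0 < y ∧ 0 < z := by
  have hx' : x ≠ 0 := by rintro rfl; simp at h
  have hy' : y ≠ 0 := by rintro rfl; simp at h
  have hz' : z ≠ 0 := by rintro rfl; simp at h
  exact ⟨lt_of_le_of_ne hx (Ne.symm hx'), lt_of_le_of_ne hy (Ne.symm hy'),
    lt_of_le_of_ne hz (Ne.symm hz')⟩

/-- the element `T_C = Σ_{i∈C} X_i X_{i*}` -/
noncomputable def TT (C : Finset ι) : R := ∑ i ∈ C, BR.b i * BR.b (BR.star i)

lemma repr_TT (C : Finset ι) (k : ι) :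
    BR.b.repr (TT BR C) k = ∑ i ∈ C, cc BR i (BR.star i) k := by
  rw [TT, map_sum, Finsupp.coe_finset_sum, Finset.sum_apply]
  rfl

lemma repr_TT_nonneg (C : Finset ι) (k : ι) : 0 ≤ BR.b.repr (TT BR C) k := by
  rw [repr_TT]
  exact Finset.sum_nonneg fun i _ => cc_nonneg BR i (BR.star i) k

lemma repr_basis_nonneg (i k : ι) : 0 ≤ BR.b.repr (BR.b i) k := by
  rw [repr_basis]
  split_ifs <;> norm_num

lemma repr_TTpow_nonneg (C : Finset ι) (p : ℕ) : ∀ (k : ι),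
    0 ≤ BR.b.repr ((TT BR C) ^ p) k := by
  induction p with
  | zero =>
    intro k
    rw [pow_zero, ← BR.b_unit, repr_basis]
    split_ifs <;> norm_num
  | succ p ih =>
    intro k
    rw [pow_succ]
    exact repr_mul_nonneg BR ih (repr_TT_nonneg BR C) k

lemma repr_TT_star (C : Finset ι) (k : ι) :
    BR.b.repr (TT BR C) (BR.star k) = BR.b.repr (TT BR C) k := by
  rw [repr_TT, repr_TT]
  refine Finset.sum_congr rfl fun i _ => ?_
  conv_lhs => rw [cc_antihom]
  rw [BR.star_invol, BR.star_invol]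

lemma repr_TTpow_star (C : Finset ι) : ∀ (p : ℕ) (k : ι),
    BR.b.repr ((TT BR C) ^ p) (BR.star k) = BR.b.repr ((TT BR C) ^ p) k := by
  intro p
  induction p with
  | zero =>
    intro k
    rw [pow_zero, ← BR.b_unit, repr_basis, repr_basis]
    have hiff : BR.unit = BR.star k ↔ BR.unit = k := by
      constructor
      · intro h
        have h2 := congrArg BR.star h
        rw [BR.star_invol, star_unit] at h2
        exact h2
      · intro h
        subst h
        have := star_unit BR
        exact this.symm
    simp only [hiff]
  | succ p ih =>
    intro k
    have hcomm : (TT BR C) ^ p * TT BR C = TT BR C * (TT BR C) ^ p := by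
      rw [← pow_succ, pow_succ']
    rw [pow_succ, repr_mul]
    conv_rhs => rw [hcomm, repr_mul]
    rw [Finset.sum_comm]
    refine Fintype.sum_equiv (Function.Involutive.toPerm BR.star (show Function.Involutive BR.star from BR.star_invol)) _ _ fun a => ?_
    refine Fintype.sum_equiv (Function.Involutive.toPerm BR.star (show Function.Involutive BR.star from BR.star_invol)) _ _ fun c => ?_
    simp only [Function.Involutive.coe_toPerm]
    rw [repr_TT_star, ih, cc_antihom BR c a (BR.star k), BR.star_invol]
    ring

/-- `T_C` is central in the subring spanned by `C`. -/
lemma central (C : Finset ι) (hstar : ∀ i ∈ C, BR.star i ∈ C)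
    (hmul : ∀ i ∈ C, ∀ j ∈ C, ∀ k, 0 < cc BR i j k → k ∈ C)
    {a : ι} (ha : a ∈ C) : BR.b a * TT BR C = TT BR C * BR.b a := by
  have hmem : ∀ i j : ι, i ∈ C → j ∈ C → ∀ k, cc BR i j k ≠ 0 → k ∈ C := fun i j hi hj k h =>
    hmul i hi j hj k (lt_of_le_of_ne (cc_nonneg BR i j k) (Ne.symm h))
  have hCiff : ∀ i, i ∈ C ↔ BR.star i ∈ C := fun i =>
    ⟨hstar i, fun h => by have := hstar _ h; rwa [BR.star_invol] at this⟩
  calc BR.b a * TT BR C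
      = ∑ i ∈ C, (BR.b a * BR.b i) * BR.b (BR.star i) := by
        rw [TT, Finset.mul_sum]
        exact Finset.sum_congr rfl fun i _ => (mul_assoc _ _ _).symm
    _ = ∑ i ∈ C, ∑ s : ι, cc BR a i s • (BR.b s * BR.b (BR.star i)) := by
        refine Finset.sum_congr rfl fun i _ => ?_
        conv_lhs => rw [← BR.b.sum_repr (BR.b a * BR.b i)]
        rw [Finset.sum_mul]
        exact Finset.sum_congr rfl fun s _ => smul_mul_assoc _ _ _
    _ = ∑ s : ι, ∑ i ∈ C, cc BR a i s • (BR.b s * BR.b (BR.star i)) := Finset.sum_comm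
    _ = ∑ s ∈ C, ∑ i ∈ C, cc BR a i s • (BR.b s * BR.b (BR.star i)) := by
        symm
        apply Finset.sum_subset (Finset.subset_univ C)
        intro s _ hs
        refine Finset.sum_eq_zero fun i hi => ?_
        have h0 : cc BR a i s = 0 := by
          by_contra h
          exact hs (hmem a i ha hi s h)
        rw [h0, zero_smul]
    _ = ∑ s ∈ C, (BR.b s * BR.b (BR.star s)) * BR.b a := by
        refine Finset.sum_congr rfl fun s hs => ?_
        calc ∑ i ∈ C, cc BR a i s • (BR.b s * BR.b (BR.star i))
            = ∑ i ∈ C, cc BR (BR.star s) a (BR.star i) • (BR.b s * BR.b (BR.star i)) := by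
              refine Finset.sum_congr rfl fun i _ => ?_
              congr 1
              rw [cc_adj_left, cc_antihom, BR.star_invol]
            _ = ∑ i ∈ C, cc BR (BR.star s) a i • (BR.b s * BR.b i) := by
              refine Finset.sum_equiv (Function.Involutive.toPerm BR.star (show Function.Involutive BR.star from BR.star_invol))
                (fun i => hCiff i) (fun i _ => ?_)
              simp only [Function.Involutive.coe_toPerm]
            _ = ∑ i : ι, cc BR (BR.star s) a i • (BR.b s * BR.b i) := by
              apply Finset.sum_subset (Finset.subset_univ C)
              intro i _ hiC
              have h0 : cc BR (BR.star s) a i = 0 := by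
                by_contra h
                exact hiC (hmem _ _ (hstar s hs) ha i h)
              rw [h0, zero_smul]
            _ = BR.b s * ∑ i : ι, cc BR (BR.star s) a i • BR.b i := by
              rw [Finset.mul_sum]
              exact Finset.sum_congr rfl fun i _ => (mul_smul_comm _ _ _).symm
            _ = BR.b s * (BR.b (BR.star s) * BR.b a) := by
              congr 1
              simp only [cc]
              exact BR.b.sum_repr (BR.b (BR.star s) * BR.b a)
            _ = (BR.b s * BR.b (BR.star s)) * BR.b a := (mul_assoc _ _ _).symm
    _ = TT BR C * BR.b a := by rw [TT, Finset.sum_mul]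

lemma central_pow (C : Finset ι) (hstar : ∀ i ∈ C, BR.star i ∈ C)
    (hmul : ∀ i ∈ C, ∀ j ∈ C, ∀ k, 0 < cc BR i j k → k ∈ C)
    {a : ι} (ha : a ∈ C) (p : ℕ) :
    BR.b a * (TT BR C) ^ p = (TT BR C) ^ p * BR.b a :=
  (Commute.pow_right (central BR C hstar hmul ha) p)

lemma mem_adOf {C : Finset ι} {k : ι} :
    k ∈ BR.adOf C ↔ ∃ p : ℕ, 1 ≤ p ∧ 0 < BR.b.repr ((TT BR C) ^ p) k := by
  classical
  rw [BasedRing.adOf, Finset.mem_filter]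
  simp [BasedRing.contains, TT]

lemma unit_mem_adOf {C : Finset ι} (hu : BR.unit ∈ C) : BR.unit ∈ BR.adOf C := by
  rw [mem_adOf]
  refine ⟨1, le_refl 1, ?_⟩
  rw [pow_one, repr_TT]
  refine Finset.sum_pos' (fun i _ => cc_nonneg BR i (BR.star i) BR.unit) ⟨BR.unit, hu, ?_⟩
  rw [cc_star_self_unit]
  norm_num

lemma star_mem_adOf {C : Finset ι} {k : ι} (h : k ∈ BR.adOf C) :
    BR.star k ∈ BR.adOf C := by
  rw [mem_adOf] at h ⊢
  obtain ⟨p, hp, hpos⟩ := h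
  exact ⟨p, hp, by rwa [repr_TTpow_star]⟩

lemma mul_mem_adOf {C : Finset ι} {k1 k2 k : ι} (h1 : k1 ∈ BR.adOf C)
    (h2 : k2 ∈ BR.adOf C) (h : 0 < cc BR k1 k2 k) : k ∈ BR.adOf C := by
  rw [mem_adOf] at h1 h2 ⊢
  obtain ⟨p, hp, h1⟩ := h1
  obtain ⟨q, hq, h2⟩ := h2
  refine ⟨p + q, by omega, ?_⟩
  rw [pow_add, repr_mul]
  refine Finset.sum_pos' (fun a _ => Finset.sum_nonneg fun c _ => ?_) ⟨k1, Finset.mem_univ _, ?_⟩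
  · exact mul_nonneg (mul_nonneg (repr_TTpow_nonneg BR C p a) (repr_TTpow_nonneg BR C q c))
      (cc_nonneg BR a c k)
  · refine Finset.sum_pos' (fun c _ => ?_) ⟨k2, Finset.mem_univ _, ?_⟩
    · exact mul_nonneg (mul_nonneg (repr_TTpow_nonneg BR C p k1) (repr_TTpow_nonneg BR C q c))
        (cc_nonneg BR k1 c k)
    · exact mul_pos (mul_pos h1 h2) h

lemma adOf_subset {C : Finset ι} (hstar : ∀ i ∈ C, BR.star i ∈ C)
    (hmul : ∀ i ∈ C, ∀ j ∈ C, ∀ k, 0 < cc BR i j k → k ∈ C) :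
    BR.adOf C ⊆ C := by
  have aux : ∀ p : ℕ, 1 ≤ p → ∀ k, 0 < BR.b.repr ((TT BR C) ^ p) k → k ∈ C := by
    intro p
    induction p with
    | zero => omega
    | succ p ih =>
      intro _ k hk
      rcases Nat.eq_zero_or_pos p with hp | hp
      · subst hp
        rw [pow_one, repr_TT] at hk
        obtain ⟨i, hi, hterm⟩ := exists_pos_term hk
        exact hmul i hi (BR.star i) (hstar i hi) k hterm
      · rw [pow_succ, repr_mul] at hk
        obtain ⟨a, _, hsum⟩ := exists_pos_term hk
        obtain ⟨c, _, hterm⟩ := exists_pos_term hsum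
        obtain ⟨hpa, hpc, hpk⟩ := trip_pos (repr_TTpow_nonneg BR C p a)
          (repr_TT_nonneg BR C c) (cc_nonneg BR a c k) hterm
        have haC : a ∈ C := ih hp a hpa
        have hcC : c ∈ C := by
          rw [repr_TT] at hpc
          obtain ⟨i, hi, ht⟩ := exists_pos_term hpc
          exact hmul i hi (BR.star i) (hstar i hi) c ht
        exact hmul a haC c hcC k hpk
  intro k hk
  rw [mem_adOf] at hk
  obtain ⟨p, hp, hpos⟩ := hk
  exact aux p hp k hpos

lemma star_mem_adOf_closed {C : Finset ι} : ∀ i ∈ BR.adOf C, BR.star i ∈ BR.adOf C :=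
  fun _ h => star_mem_adOf BR h

lemma mul_mem_adOf_closed {C : Finset ι} :
    ∀ i ∈ BR.adOf C, ∀ j ∈ BR.adOf C, ∀ k, 0 < cc BR i j k → k ∈ BR.adOf C :=
  fun _ hi _ hj _ hk => mul_mem_adOf BR hi hj hk

/-- conjugation stability of the adjoint subring -/
lemma conj_mem_adOf {C : Finset ι} (hstar : ∀ i ∈ C, BR.star i ∈ C)
    (hmul : ∀ i ∈ C, ∀ j ∈ C, ∀ k, 0 < cc BR i j k → k ∈ C)
    {i m u : ι} (hi : i ∈ C) (hm : m ∈ BR.adOf C)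
    (hu : 0 < BR.b.repr (BR.b i * BR.b m * BR.b (BR.star i)) u) :
    u ∈ BR.adOf C := by
  rw [mem_adOf] at hm ⊢
  obtain ⟨p, hp, hmp⟩ := hm
  refine ⟨p + 1, by omega, ?_⟩
  -- first : repr (b i * T^p * b (star i)) u is positive
  have hexp : BR.b i * (TT BR C) ^ p * BR.b (BR.star i) =
      ∑ m' : ι, BR.b.repr ((TT BR C) ^ p) m' • (BR.b i * BR.b m' * BR.b (BR.star i)) := by
    conv_lhs => rw [← BR.b.sum_repr ((TT BR C) ^ p)]
    rw [Finset.mul_sum, Finset.sum_mul]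
    refine Finset.sum_congr rfl fun m' _ => ?_
    rw [mul_smul_comm, smul_mul_assoc]
  have hmid : 0 < BR.b.repr (BR.b i * (TT BR C) ^ p * BR.b (BR.star i)) u := by
    rw [hexp, map_sum, Finsupp.coe_finset_sum, Finset.sum_apply]
    refine Finset.sum_pos' (fun m' _ => ?_) ⟨m, Finset.mem_univ _, ?_⟩
    · rw [map_smul, Finsupp.smul_apply, smul_eq_mul]
      refine mul_nonneg (repr_TTpow_nonneg BR C p m') ?_
      exact repr_mul_nonneg BR (fun a => BR.c_nonneg i m' a)
        (fun a => repr_basis_nonneg BR (BR.star i) a) u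
    · rw [map_smul, Finsupp.smul_apply, smul_eq_mul]
      exact mul_pos hmp hu
  -- rewrite using centrality
  have hc : BR.b i * (TT BR C) ^ p * BR.b (BR.star i) =
      (TT BR C) ^ p * (BR.b i * BR.b (BR.star i)) := by
    rw [central_pow BR C hstar hmul hi, mul_assoc]
  rw [hc] at hmid
  -- compare with T^{p+1}
  have hT : (TT BR C) ^ (p + 1) = ∑ a ∈ C, (TT BR C) ^ p * (BR.b a * BR.b (BR.star a)) := by
    rw [pow_succ, TT, Finset.mul_sum]
  have : BR.b.repr ((TT BR C) ^ p * (BR.b i * BR.b (BR.star i))) u ≤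
      BR.b.repr ((TT BR C) ^ (p + 1)) u := by
    rw [hT, map_sum, Finsupp.coe_finset_sum, Finset.sum_apply]
    refine Finset.single_le_sum (f := fun a => BR.b.repr ((TT BR C) ^ p * (BR.b a * BR.b (BR.star a))) u) (fun a _ => ?_) hi
    exact repr_mul_nonneg BR (repr_TTpow_nonneg BR C p) (fun x => BR.c_nonneg a (BR.star a) x) u
  omega

lemma upperOf_zero (C : Finset ι) : BR.upperOf C 0 = C := rfl

lemma upper_shift (C : Finset ι) : ∀ n, BR.upperOf C (n + 1) = BR.upperOf (BR.adOf C) n := by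
  intro n
  induction n with
  | zero => rfl
  | succ n ih =>
    show BR.adOf (BR.upperOf C (n + 1)) = BR.adOf (BR.upperOf (BR.adOf C) n)
    rw [ih]


lemma pair_pos {x y : ℤ} (hx : 0 ≤ x) (hy : 0 ≤ y) (h : 0 < x * y) :
    0 < x ∧ 0 < y := by
  have hx' : x ≠ 0 := by rintro rfl; simp at h
  have hy' : y ≠ 0 := by rintro rfl; simp at h
  exact ⟨lt_of_le_of_ne hx (Ne.symm hx'), lt_of_le_of_ne hy (Ne.symm hy')⟩

/-- FPdim of the star of a basic element equals that of the element. -/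
lemma f_star (f : R →+* ℝ) (hf : ∀ i, 0 < f (BR.b i)) (i : ι) :
    f (BR.b (BR.star i)) = f (BR.b i) := by
  have hexp : ∀ a b : ι, f (BR.b a) * f (BR.b b) = ∑ k : ι, (cc BR a b k : ℝ) * f (BR.b k) := by
    intro a b
    rw [← map_mul]
    conv_lhs => rw [← BR.b.sum_repr (BR.b a * BR.b b)]
    rw [map_sum]
    refine Finset.sum_congr rfl fun k _ => ?_
    rw [map_zsmul, cc, zsmul_eq_mul]
  have key : f (BR.b i) * (∑ j : ι, f (BR.b j) ^ 2) =
      f (BR.b (BR.star i)) * (∑ j : ι, f (BR.b j) ^ 2) := by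
    calc f (BR.b i) * ∑ j : ι, f (BR.b j) ^ 2
        = ∑ j : ι, f (BR.b j) * (f (BR.b i) * f (BR.b j)) := by
          rw [Finset.mul_sum]
          exact Finset.sum_congr rfl fun j _ => by ring
      _ = ∑ j : ι, f (BR.b j) * ∑ k : ι, (cc BR i j k : ℝ) * f (BR.b k) := by
          exact Finset.sum_congr rfl fun j _ => by rw [hexp i j]
      _ = ∑ j : ι, ∑ k : ι, (cc BR i j k : ℝ) * (f (BR.b j) * f (BR.b k)) := by
          refine Finset.sum_congr rfl fun j _ => ?_
          rw [Finset.mul_sum]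
          exact Finset.sum_congr rfl fun k _ => by ring
      _ = ∑ k : ι, ∑ j : ι, (cc BR i j k : ℝ) * (f (BR.b j) * f (BR.b k)) := Finset.sum_comm
      _ = ∑ k : ι, f (BR.b k) * ∑ j : ι, (cc BR (BR.star i) k j : ℝ) * f (BR.b j) := by
          refine Finset.sum_congr rfl fun k _ => ?_
          rw [Finset.mul_sum]
          refine Finset.sum_congr rfl fun j _ => ?_
          rw [← cc_adj_left]
          ring
      _ = ∑ k : ι, f (BR.b k) * (f (BR.b (BR.star i)) * f (BR.b k)) := by
          exact Finset.sum_congr rfl fun k _ => by rw [← hexp (BR.star i) k]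
      _ = f (BR.b (BR.star i)) * ∑ j : ι, f (BR.b j) ^ 2 := by
          rw [Finset.mul_sum]
          exact Finset.sum_congr rfl fun j _ => by ring
  have hpos : 0 < ∑ j : ι, f (BR.b j) ^ 2 := by
    have : Nonempty ι := ⟨BR.unit⟩
    exact Finset.sum_pos (fun j _ => pow_pos (hf j) 2) Finset.univ_nonempty
  exact (mul_right_cancel₀ (ne_of_gt hpos) key).symm

section ModuleSide

variable {κ M : Type*} [Fintype κ] [DecidableEq κ] [AddCommGroup M] [Module R M]
variable (v : Module.Basis κ ℤ M)

/-- module structure constants -/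
noncomputable def dd (i : ι) (j k : κ) : ℤ := v.repr (BR.b i • v j) k

lemma act_repr (x : R) (j k : κ) :
    v.repr (x • v j) k = ∑ u : ι, BR.b.repr x u * dd BR v u j k := by
  conv_lhs => rw [← BR.b.sum_repr x]
  rw [Finset.sum_smul, map_sum, Finsupp.coe_finset_sum, Finset.sum_apply]
  refine Finset.sum_congr rfl fun u _ => ?_
  rw [smul_assoc, map_smul, Finsupp.smul_apply, smul_eq_mul, dd]

lemma act_comp (x y : R) (j k : κ) :
    v.repr ((x * y) • v j) k = ∑ m : κ, v.repr (y • v j) m * v.repr (x • v m) k := by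
  rw [mul_smul]
  conv_lhs => rw [← v.sum_repr (y • v j)]
  rw [Finset.smul_sum, map_sum, Finsupp.coe_finset_sum, Finset.sum_apply]
  refine Finset.sum_congr rfl fun m _ => ?_
  rw [smul_comm x, map_smul, Finsupp.smul_apply, smul_eq_mul]

lemma act_nonneg (hdn : ∀ (i : ι) (j k : κ), 0 ≤ dd BR v i j k) {x : R}
    (hx : ∀ u, 0 ≤ BR.b.repr x u) (j k : κ) : 0 ≤ v.repr (x • v j) k := by
  rw [act_repr BR v]
  exact Finset.sum_nonneg fun u _ => mul_nonneg (hx u) (hdn u j k)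

lemma dd_unit (j k : κ) : dd BR v BR.unit j k = if j = k then 1 else 0 := by
  rw [dd, BR.b_unit, one_smul, v.repr_self_apply]

lemma exists_dd_pos (hdn : ∀ (i : ι) (j k : κ), 0 ≤ dd BR v i j k)
    (hda : ∀ (i : ι) (j k : κ), dd BR v i j k = dd BR v (BR.star i) k j)
    (i : ι) (j : κ) : ∃ k, 0 < dd BR v i j k := by
  have h2 : (1 : ℤ) ≤ v.repr ((BR.b (BR.star i) * BR.b i) • v j) j := by
    rw [act_repr BR v]
    have hterm : (1 : ℤ) = BR.b.repr (BR.b (BR.star i) * BR.b i) BR.unit * dd BR v BR.unit j j := by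
      have h1 : BR.b.repr (BR.b (BR.star i) * BR.b i) BR.unit = 1 := cc_star_self_unit' BR i
      rw [h1, dd_unit BR v, if_pos rfl, one_mul]
    rw [hterm]
    exact Finset.single_le_sum
      (f := fun u => BR.b.repr (BR.b (BR.star i) * BR.b i) u * dd BR v u j j)
      (fun u _ => mul_nonneg (cc_nonneg BR (BR.star i) i u) (hdn u j j)) (Finset.mem_univ _)
  rw [act_comp v] at h2
  have hpos : 0 < ∑ m : κ, v.repr (BR.b i • v j) m * v.repr (BR.b (BR.star i) • v m) j := by
    omega
  obtain ⟨m, _, hm⟩ := exists_pos_term hpos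
  exact ⟨m, (pair_pos (hdn i j m) (hdn (BR.star i) m j) hm).1⟩

/-- single step of the reach relation -/
def Step (C : Finset ι) (a b : κ) : Prop := ∃ i ∈ C, 0 < dd BR v i a b

def Reach (C : Finset ι) : κ → κ → Prop := Relation.ReflTransGen (Step BR v C)

lemma step_symm (hda : ∀ (i : ι) (j k : κ), dd BR v i j k = dd BR v (BR.star i) k j)
    {C : Finset ι} (hstar : ∀ i ∈ C, BR.star i ∈ C) {a b : κ}
    (h : Step BR v C a b) : Step BR v C b a := by
  obtain ⟨i, hi, hpos⟩ := h
  exact ⟨BR.star i, hstar i hi, by rwa [hda] at hpos⟩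

lemma reach_symm (hda : ∀ (i : ι) (j k : κ), dd BR v i j k = dd BR v (BR.star i) k j)
    {C : Finset ι} (hstar : ∀ i ∈ C, BR.star i ∈ C) {a b : κ}
    (h : Reach BR v C a b) : Reach BR v C b a := by
  induction h with
  | refl => exact .refl
  | tail _ hbc ih => exact .head (step_symm BR v hda hstar hbc) ih

/-- The transport lemma : `X_i` maps one `R_ad`-component into a single one. -/
lemma transport (hdn : ∀ (i : ι) (j k : κ), 0 ≤ dd BR v i j k)
    (hda : ∀ (i : ι) (j k : κ), dd BR v i j k = dd BR v (BR.star i) k j)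
    {C : Finset ι} (hstar : ∀ i ∈ C, BR.star i ∈ C)
    (hmul : ∀ i ∈ C, ∀ j ∈ C, ∀ k, 0 < cc BR i j k → k ∈ C)
    {i : ι} (hi : i ∈ C) {j1 j2 : κ} (hreach : Reach BR v (BR.adOf C) j1 j2) :
    ∀ k1 k2 : κ, 0 < dd BR v i j1 k1 → 0 < dd BR v i j2 k2 →
      Reach BR v (BR.adOf C) k1 k2 := by
  induction hreach with
  | refl =>
    intro k1 k2 h1 h2
    have hpos : 0 < v.repr ((BR.b i * BR.b (BR.star i)) • v k1) k2 := by
      rw [act_comp v]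
      refine Finset.sum_pos' (fun m _ => mul_nonneg (hdn (BR.star i) k1 m) (hdn i m k2))
        ⟨j1, Finset.mem_univ _, ?_⟩
      have hb : 0 < dd BR v (BR.star i) k1 j1 := by rwa [← hda]
      exact mul_pos hb h2
    rw [act_repr BR v] at hpos
    obtain ⟨u, _, hterm⟩ := exists_pos_term hpos
    obtain ⟨hu1, hu2⟩ := pair_pos (cc_nonneg BR i (BR.star i) u) (hdn u k1 k2) hterm
    have huC : u ∈ BR.adOf C := by
      rw [mem_adOf]
      refine ⟨1, le_refl 1, ?_⟩
      rw [pow_one, repr_TT]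
      calc (0:ℤ) < cc BR i (BR.star i) u := hu1
        _ ≤ ∑ a ∈ C, cc BR a (BR.star a) u :=
          Finset.single_le_sum (fun a _ => cc_nonneg BR a (BR.star a) u) hi
    exact Relation.ReflTransGen.single ⟨u, huC, hu2⟩
  | tail hab hbc ih =>
    rename_i bmid j2'
    intro k1 k2 h1 h2
    obtain ⟨mm, hmmC, hstep⟩ := hbc
    obtain ⟨k'', hk''⟩ := exists_dd_pos BR v hdn hda i bmid
    have hr1 := ih k1 k'' h1 hk''
    have hpos : 0 < v.repr ((BR.b i * BR.b mm * BR.b (BR.star i)) • v k'') k2 := by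
      rw [act_comp v]
      refine Finset.sum_pos' (fun m _ => mul_nonneg (hdn (BR.star i) k'' m)
        (act_nonneg BR v hdn (fun u => BR.c_nonneg i mm u) m k2)) ⟨bmid, Finset.mem_univ _, ?_⟩
      have hfst : 0 < dd BR v (BR.star i) k'' bmid := by rwa [← hda]
      refine mul_pos hfst ?_
      rw [act_comp v]
      refine Finset.sum_pos' (fun m _ => mul_nonneg (hdn mm bmid m) (hdn i m k2))
        ⟨j2', Finset.mem_univ _, mul_pos hstep h2⟩
    rw [act_repr BR v] at hpos
    obtain ⟨u, _, hterm⟩ := exists_pos_term hpos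
    obtain ⟨hu1, hu2⟩ := pair_pos
      (repr_mul_nonneg BR (fun a => BR.c_nonneg i mm a) (fun a => repr_basis_nonneg BR (BR.star i) a) u)
      (hdn u k'' k2) hterm
    have huC : u ∈ BR.adOf C := conj_mem_adOf BR hstar hmul hi hmmC hu1
    exact hr1.tail ⟨u, huC, hu2⟩


/-- The main induction: divisibility for nilpotent based subrings. -/
lemma key (hdn : ∀ (i : ι) (j k : κ), 0 ≤ dd BR v i j k)
    (hda : ∀ (i : ι) (j k : κ), dd BR v i j k = dd BR v (BR.star i) k j)
    (f : R →+* ℝ) (hf : ∀ i, 0 < f (BR.b i))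
    (μ : κ → ℝ) (hμ : ∀ j, 0 < μ j)
    (heig : ∀ (i : ι) (k : κ),
      (∑ j : κ, ((dd BR v i j k : ℤ) : ℝ) * μ j) = f (BR.b i) * μ k) :
    ∀ n : ℕ, ∀ C : Finset ι, BR.unit ∈ C → (∀ i ∈ C, BR.star i ∈ C) →
      (∀ i ∈ C, ∀ j ∈ C, ∀ k, 0 < cc BR i j k → k ∈ C) →
      BR.upperOf C n = {BR.unit} →
      ∀ S : Finset κ, (∀ i ∈ C, ∀ j ∈ S, ∀ k, 0 < dd BR v i j k → k ∈ S) →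
      (∀ a ∈ S, ∀ b ∈ S, Reach BR v C a b) →
      ∀ j ∈ S, ∃ m : ℤ, (∑ k ∈ S, μ k ^ 2) = (m : ℝ) * μ j ^ 2 := by
  intro n
  induction n with
  | zero =>
    intro C _ _ _ hup S _ hconn j hj
    have hC : C = {BR.unit} := hup
    have heqkv : ∀ a b : κ, Reach BR v C a b → a = b := by
      intro a b hr
      induction hr with
      | refl => rfl
      | tail hab hbc ih =>
        obtain ⟨i, hiC, hpos⟩ := hbc
        rw [hC, Finset.mem_singleton] at hiC
        subst hiC
        rw [dd_unit BR v] at hpos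
        split_ifs at hpos with h
        · exact ih.trans h
        · omega
    have hSeq : S = {j} := by
      rw [Finset.eq_singleton_iff_unique_mem]
      exact ⟨hj, fun b hb => (heqkv j b (hconn j hj b hb)).symm⟩
    rw [hSeq, Finset.sum_singleton]
    exact ⟨1, by norm_num⟩
  | succ n ih =>
    intro C hu hstar hmul hup S hstab hconn j hj
    classical
    set C' := BR.adOf C with hC'
    have hu' : BR.unit ∈ C' := unit_mem_adOf BR hu
    have hstar' : ∀ i ∈ C', BR.star i ∈ C' := star_mem_adOf_closed BR
    have hmul' : ∀ i ∈ C', ∀ j ∈ C', ∀ k, 0 < cc BR i j k → k ∈ C' := mul_mem_adOf_closed BR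
    have hsub : C' ⊆ C := adOf_subset BR hstar hmul
    have hup' : BR.upperOf C' n = {BR.unit} := by
      rw [hC', ← upper_shift]
      exact hup
    set comp : κ → Finset κ := fun x => S.filter (fun y => Reach BR v C' x y) with hcomp
    have hmem_comp : ∀ x y, y ∈ comp x ↔ y ∈ S ∧ Reach BR v C' x y := by
      intro x y
      rw [hcomp]
      simp [Finset.mem_filter]
    have hself : ∀ x ∈ S, x ∈ comp x := fun x hx => (hmem_comp x x).2 ⟨hx, .refl⟩
    have hcomp_eq : ∀ x y, x ∈ S → y ∈ S → Reach BR v C' x y → comp x = comp y := by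
      intro x y _ _ hr
      ext z
      rw [hmem_comp, hmem_comp]
      constructor
      · rintro ⟨hz, hrz⟩
        exact ⟨hz, Relation.ReflTransGen.trans (reach_symm BR v hda hstar' hr) hrz⟩
      · rintro ⟨hz, hrz⟩
        exact ⟨hz, hr.trans hrz⟩
    have hIH : ∀ x ∈ S, ∃ m : ℤ, (∑ k ∈ comp x, μ k ^ 2) = (m : ℝ) * μ x ^ 2 := by
      intro x hx
      refine ih C' hu' hstar' hmul' hup' (comp x) ?_ ?_ x (hself x hx)
      · intro i hiC' j' hj' k hk
        rw [hmem_comp] at hj' ⊢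
        exact ⟨hstab i (hsub hiC') j' hj'.1 k hk, hj'.2.tail ⟨i, hiC', hk⟩⟩
      · intro a ha b hb
        rw [hmem_comp] at ha hb
        exact Relation.ReflTransGen.trans (reach_symm BR v hda hstar' ha.2) hb.2
    -- the analytic step : `w` is constant across an edge of the `C`-action
    have hWedge : ∀ i ∈ C, ∀ a ∈ S, ∀ b ∈ S, 0 < dd BR v i a b →
        (∑ k ∈ comp a, μ k ^ 2) = (∑ k ∈ comp b, μ k ^ 2) := by
      intro i hi a ha b hb hab
      have hfstar : f (BR.b (BR.star i)) = f (BR.b i) := f_star BR f hf i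
      have htgt : ∀ a', Reach BR v C' a a' → a' ∈ S → ∀ k', 0 < dd BR v i a' k' →
          k' ∈ comp b := by
        intro a' hra' ha'S k' hk'
        have hr := transport BR v hdn hda hstar hmul hi hra' b k' hab hk'
        exact (hmem_comp b k').2 ⟨hstab i hi a' ha'S k' hk', hr⟩
      have hsrc : ∀ b', Reach BR v C' b b' → b' ∈ S → ∀ j', 0 < dd BR v i j' b' →
          j' ∈ comp a := by
        intro b' hrb' hb'S j' hj'
        have h1 : 0 < dd BR v (BR.star i) b a := by rwa [hda] at hab
        have h2 : 0 < dd BR v (BR.star i) b' j' := by rwa [hda] at hj'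
        have hr := transport BR v hdn hda hstar hmul (hstar i hi) hrb' a j' h1 h2
        exact (hmem_comp a j').2 ⟨hstab (BR.star i) (hstar i hi) b' hb'S j' h2, hr⟩
      have hA1 : ∀ k' ∈ comp b,
          (∑ j' ∈ comp a, ((dd BR v i j' k' : ℤ) : ℝ) * μ j') = f (BR.b i) * μ k' := by
        intro k' hk'
        have hext : ∑ j' ∈ comp a, ((dd BR v i j' k' : ℤ) : ℝ) * μ j'
            = ∑ j' : κ, ((dd BR v i j' k' : ℤ) : ℝ) * μ j' := by
          apply Finset.sum_subset (Finset.subset_univ _)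
          intro j' _ hj'
          by_cases h : 0 < dd BR v i j' k'
          · exfalso
            obtain ⟨hk'S, hrk'⟩ := (hmem_comp b k').1 hk'
            exact hj' (hsrc k' hrk' hk'S j' h)
          · have h0 : dd BR v i j' k' = 0 := le_antisymm (not_lt.1 h) (hdn i j' k')
            rw [h0]
            norm_num
        rw [hext]
        exact heig i k'
      have hA2 : ∀ j' ∈ comp a,
          (∑ k' ∈ comp b, ((dd BR v i j' k' : ℤ) : ℝ) * μ k') = f (BR.b i) * μ j' := by
        intro j' hj'
        obtain ⟨hj'S, hrj'⟩ := (hmem_comp a j').1 hj'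
        have hext : ∑ k' ∈ comp b, ((dd BR v i j' k' : ℤ) : ℝ) * μ k'
            = ∑ k' : κ, ((dd BR v i j' k' : ℤ) : ℝ) * μ k' := by
          apply Finset.sum_subset (Finset.subset_univ _)
          intro k' _ hk'
          by_cases h : 0 < dd BR v i j' k'
          · exact absurd (htgt j' hrj' hj'S k' h) hk'
          · have h0 : dd BR v i j' k' = 0 := le_antisymm (not_lt.1 h) (hdn i j' k')
            rw [h0]
            norm_num
        rw [hext]
        have hsw : ∑ k' : κ, ((dd BR v i j' k' : ℤ) : ℝ) * μ k'
            = ∑ k' : κ, ((dd BR v (BR.star i) k' j' : ℤ) : ℝ) * μ k' := by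
          refine Finset.sum_congr rfl fun k' _ => ?_
          rw [hda]
        rw [hsw, heig (BR.star i) j', hfstar]
      have hAA : f (BR.b i) * (∑ k ∈ comp b, μ k ^ 2) =
          f (BR.b i) * (∑ k ∈ comp a, μ k ^ 2) := by
        calc f (BR.b i) * (∑ k ∈ comp b, μ k ^ 2)
            = ∑ k' ∈ comp b, (f (BR.b i) * μ k') * μ k' := by
              rw [Finset.mul_sum]
              exact Finset.sum_congr rfl fun k' _ => by ring
          _ = ∑ k' ∈ comp b, (∑ j' ∈ comp a, ((dd BR v i j' k' : ℤ) : ℝ) * μ j') * μ k' := by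
              refine Finset.sum_congr rfl fun k' hk' => ?_
              rw [hA1 k' hk']
          _ = ∑ k' ∈ comp b, ∑ j' ∈ comp a, ((dd BR v i j' k' : ℤ) : ℝ) * μ j' * μ k' := by
              refine Finset.sum_congr rfl fun k' _ => ?_
              rw [Finset.sum_mul]
          _ = ∑ j' ∈ comp a, ∑ k' ∈ comp b, ((dd BR v i j' k' : ℤ) : ℝ) * μ j' * μ k' :=
              Finset.sum_comm
          _ = ∑ j' ∈ comp a, (∑ k' ∈ comp b, ((dd BR v i j' k' : ℤ) : ℝ) * μ k') * μ j' := by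
              refine Finset.sum_congr rfl fun j' _ => ?_
              rw [Finset.sum_mul]
              exact Finset.sum_congr rfl fun k' _ => by ring
          _ = ∑ j' ∈ comp a, (f (BR.b i) * μ j') * μ j' := by
              refine Finset.sum_congr rfl fun j' hj' => ?_
              rw [hA2 j' hj']
          _ = f (BR.b i) * (∑ k ∈ comp a, μ k ^ 2) := by
              rw [Finset.mul_sum]
              exact Finset.sum_congr rfl fun j' _ => by ring
      exact (mul_left_cancel₀ (ne_of_gt (hf i)) hAA).symm
    have hWconst : ∀ a ∈ S, ∀ b, Reach BR v C a b →
        b ∈ S ∧ (∑ k ∈ comp a, μ k ^ 2) = (∑ k ∈ comp b, μ k ^ 2) := by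
      intro a ha b hr
      induction hr with
      | refl => exact ⟨ha, rfl⟩
      | tail hab hbc ih2 =>
        obtain ⟨hbS, hwab⟩ := ih2
        obtain ⟨i, hiC, hpos⟩ := hbc
        have hcS := hstab i hiC _ hbS _ hpos
        exact ⟨hcS, hwab.trans (hWedge i hiC _ hbS _ hcS hpos)⟩
    obtain ⟨mj, hmj⟩ := hIH j hj
    refine ⟨((S.image comp).card : ℤ) * mj, ?_⟩
    have hfib : ∑ k ∈ S, μ k ^ 2 =
        ∑ t ∈ S.image comp, ∑ k ∈ S.filter (fun k => comp k = t), μ k ^ 2 :=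
      (Finset.sum_fiberwise_of_maps_to (fun x hx => Finset.mem_image_of_mem comp hx) _).symm
    rw [hfib]
    have hfibval : ∀ t ∈ S.image comp,
        (∑ k ∈ S.filter (fun k => comp k = t), μ k ^ 2) = (mj : ℝ) * μ j ^ 2 := by
      intro t ht
      obtain ⟨x0, hx0, rfl⟩ := Finset.mem_image.1 ht
      have hfilter : S.filter (fun k => comp k = comp x0) = comp x0 := by
        ext k
        rw [Finset.mem_filter, hmem_comp]
        constructor
        · rintro ⟨hk, hck⟩
          refine ⟨hk, ?_⟩
          have hkk : k ∈ comp k := hself k hk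
          rw [hck] at hkk
          exact ((hmem_comp x0 k).1 hkk).2
        · rintro ⟨hk, hr⟩
          exact ⟨hk, (hcomp_eq x0 k hx0 hk hr).symm⟩
      rw [hfilter]
      have h2 := (hWconst j hj x0 (hconn j hj x0 hx0)).2
      rw [← h2, hmj]
    rw [Finset.sum_congr rfl hfibval, Finset.sum_const, nsmul_eq_mul]
    push_cast
    ring

end ModuleSide

end FMD

/-- Let `R` be a nilpotent based ring, `M` an indecomposable
based `R`-module with basis `{V_j}_{j∈κ}` (the action has nonnegative structure
constants `d_{ij}^k` satisfying `d_{ij}^k = d_{i*k}^j`, and no proper nonempty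
subset of the basis spans an `R`-stable submodule), `f = FPdim : R → ℝ` the
ring homomorphism positive on basic elements, and `(μ_j)` positive reals such
that `Q = Σ_j μ_j V_j` satisfies `X·Q = FPdim(X)·Q` for all `X ∈ R` (stated
coefficientwise). Then `FPdim(M)/FPdim(V_j)² = (Σ_k μ_k²)/μ_j²` is an integer
for every `j`. -/
theorem fpdim_module_divisibility {ι R : Type*} [Fintype ι] [DecidableEq ι]
    [Ring R] (BR : BasedRing ι R)
    (hnil : ∃ n : ℕ, BR.upperOf Finset.univ n = {BR.unit})
    {κ M : Type*} [Fintype κ] [DecidableEq κ] [AddCommGroup M] [Module R M]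
    (v : Module.Basis κ ℤ M)
    (hd_nonneg : ∀ (i : ι) (j k : κ), 0 ≤ v.repr (BR.b i • v j) k)
    (hd_adj : ∀ (i : ι) (j k : κ),
      v.repr (BR.b i • v j) k = v.repr (BR.b (BR.star i) • v k) j)
    (hindec : ∀ D : Set κ,
      (∀ (i : ι), ∀ j ∈ D, ∀ k : κ, 0 < v.repr (BR.b i • v j) k → k ∈ D) →
      D = ∅ ∨ D = Set.univ)
    (f : R →+* ℝ) (hf : ∀ i, 0 < f (BR.b i))
    (μ : κ → ℝ) (hμ : ∀ j, 0 < μ j)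
    (heig : ∀ (i : ι) (k : κ),
      (∑ j : κ, ((v.repr (BR.b i • v j) k : ℤ) : ℝ) * μ j) = f (BR.b i) * μ k) :
    ∀ j : κ, ∃ m : ℤ, (∑ k : κ, (μ k) ^ 2) = (m : ℝ) * (μ j) ^ 2 := by
  classical
  intro j
  obtain ⟨N, hN⟩ := hnil
  have hconn : ∀ a ∈ (Finset.univ : Finset κ), ∀ b ∈ (Finset.univ : Finset κ),
      FMD.Reach BR v Finset.univ a b := by
    intro a _ b _
    have hcl : ∀ (i : ι), ∀ j' ∈ {k | FMD.Reach BR v Finset.univ a k}, ∀ k : κ,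
        0 < v.repr (BR.b i • v j') k → k ∈ {k | FMD.Reach BR v Finset.univ a k} := by
      intro i j' hj' k hk
      exact Relation.ReflTransGen.tail hj' ⟨i, Finset.mem_univ i, hk⟩
    rcases hindec _ hcl with h | h
    · exfalso
      have ha : a ∈ {k | FMD.Reach BR v Finset.univ a k} := Relation.ReflTransGen.refl
      rw [h] at ha
      exact ha
    · have hb : b ∈ {k | FMD.Reach BR v Finset.univ a k} := by
        rw [h]
        trivial
      exact hb
  have hkey := FMD.key BR v hd_nonneg hd_adj f hf μ hμ heig N Finset.univ
    (Finset.mem_univ _) (fun i _ => Finset.mem_univ _)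
    (fun i _ j' _ k _ => Finset.mem_univ k) hN Finset.univ
    (fun i _ j' _ k _ => Finset.mem_univ k) hconn j (Finset.mem_univ j)
  exact hkey
end

section
/- Let R be a nilpotent based ring. Then for every basic element X of R, the ratio FPdim(R_ad)/FPdim(X)² is an integer, where FPdim(R_ad) = Σ FPdim(Y)² with the sum over basic elements Y lying in R_ad. (Categorically: in a nilpotent fusion category C, the square of the Frobenius–Perron dimension of any simple object divides FPdim(C_ad).) -/
namespace BRAux

open Finset

variable {ι R : Type*} [Fintype ι] [DecidableEq ι] [Ring R] (BR : BasedRing ι R)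

/-- integer coordinate of `x` at `k`. -/
noncomputable def E (x : R) (k : ι) : ℤ := BR.b.repr x k

/-- structure constants -/
noncomputable def cf (i j k : ι) : ℤ := BR.b.repr (BR.b i * BR.b j) k

lemma cf_def (i j k : ι) : cf BR i j k = E BR (BR.b i * BR.b j) k := rfl

lemma cf_nonneg (i j k : ι) : 0 ≤ cf BR i j k := BR.c_nonneg i j k

lemma adjR (i j k : ι) : cf BR i j k = cf BR k (BR.star j) i := BR.adj_right i j k

lemma adjL (i j k : ι) : cf BR i j k = cf BR (BR.star i) k j := BR.adj_left i j k

lemma E_b (i k : ι) : E BR (BR.b i) k = if i = k then 1 else 0 := by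
  simp [E, Finsupp.single_apply]

lemma E_b_self (i : ι) : E BR (BR.b i) i = 1 := by simp [E_b]

lemma E_b_pos_iff {i k : ι} : 0 < E BR (BR.b i) k ↔ i = k := by
  rw [E_b]; split <;> simp_all

lemma E_one (k : ι) : E BR 1 k = if BR.unit = k then 1 else 0 := by
  rw [← BR.b_unit]; exact E_b BR _ _

lemma E_sum {α : Type*} (s : Finset α) (g : α → R) (k : ι) :
    E BR (∑ a ∈ s, g a) k = ∑ a ∈ s, E BR (g a) k := by
  simp [E]

lemma E_mul (x y : R) (k : ι) :
    E BR (x * y) k = ∑ m : ι, ∑ n : ι, E BR x m * E BR y n * cf BR m n k := by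
  conv_lhs => rw [← BR.b.sum_repr x, ← BR.b.sum_repr y]
  rw [Finset.sum_mul_sum]
  have h : ∀ (a c : ℤ) (u v : R), (a • u) * (c • v) = (a * c) • (u * v) := by
    intro a c u v
    rw [smul_mul_assoc, mul_smul_comm, smul_smul]
  simp only [h, E, cf, map_sum, map_zsmul, Finsupp.coe_finset_sum, Finset.sum_apply,
    Finsupp.smul_apply, smul_eq_mul, mul_assoc]

lemma cf_unit_left (j k : ι) : cf BR BR.unit j k = if j = k then 1 else 0 := by
  rw [cf_def, BR.b_unit, one_mul, E_b]

lemma cf_unit_right (j k : ι) : cf BR j BR.unit k = if j = k then 1 else 0 := by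
  rw [cf_def, BR.b_unit, mul_one, E_b]

lemma star_unit : BR.star BR.unit = BR.unit := by
  have h := adjR BR BR.unit BR.unit BR.unit
  rw [cf_unit_left] at h
  simp only [if_pos rfl] at h
  have h2 : cf BR BR.unit (BR.star BR.unit) BR.unit
      = if BR.star BR.unit = BR.unit then 1 else 0 := cf_unit_left BR _ _
  rw [← h] at h2
  by_contra hne
  rw [if_neg hne] at h2
  exact one_ne_zero h2

lemma cf_sigma (i j k : ι) :
    cf BR i j k = cf BR (BR.star j) (BR.star i) (BR.star k) := by
  rw [adjR BR i j k, adjL BR k (BR.star j) i, adjR BR (BR.star k) i (BR.star j)]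

lemma cf_dual_unit (i : ι) : cf BR i (BR.star i) BR.unit = 1 := by
  rw [adjR, BR.star_invol, cf_unit_left, if_pos rfl]

end BRAux

namespace BRAux

open Finset

variable {ι R : Type*} [Fintype ι] [DecidableEq ι] [Ring R] (BR : BasedRing ι R)

/-- all coordinates nonnegative -/
def NN (x : R) : Prop := ∀ k, 0 ≤ E BR x k

lemma NN_b (i : ι) : NN BR (BR.b i) := fun k => by rw [E_b]; split <;> norm_num

lemma NN_one : NN BR (1 : R) := by rw [← BR.b_unit]; exact NN_b BR _

lemma NN_mul {x y : R} (hx : NN BR x) (hy : NN BR y) : NN BR (x * y) := by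
  intro k
  rw [E_mul]
  refine Finset.sum_nonneg fun m _ => Finset.sum_nonneg fun n _ => ?_
  exact mul_nonneg (mul_nonneg (hx m) (hy n)) (cf_nonneg BR m n k)

lemma NN_sum {α : Type*} {s : Finset α} {g : α → R} (h : ∀ a ∈ s, NN BR (g a)) :
    NN BR (∑ a ∈ s, g a) := by
  intro k
  rw [E_sum]
  exact Finset.sum_nonneg fun a ha => h a ha k

lemma NN_pow {x : R} (hx : NN BR x) : ∀ N, NN BR (x ^ N) := by
  intro N
  induction N with
  | zero => rw [pow_zero]; exact NN_one BR
  | succ n ih => rw [pow_succ]; exact NN_mul BR ih hx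

lemma E_b_pos (i : ι) : 0 < E BR (BR.b i) i := by rw [E_b_self]; norm_num

lemma exists_pos_of_sum_pos {α : Type*} {s : Finset α} {g : α → ℤ}
    (h : 0 < ∑ a ∈ s, g a) : ∃ a ∈ s, 0 < g a := by
  by_contra hc
  push_neg at hc
  exact absurd (Finset.sum_nonpos hc) (not_le.mpr h)

lemma pos_factors {a b : ℤ} (ha : 0 ≤ a) (hb : 0 ≤ b) (h : 0 < a * b) :
    0 < a ∧ 0 < b := by
  constructor
  · rcases ha.lt_or_eq with h' | h'
    · exact h'
    · exfalso; rw [← h', zero_mul] at h; exact lt_irrefl 0 h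
  · rcases hb.lt_or_eq with h' | h'
    · exact h'
    · exfalso; rw [← h', mul_zero] at h; exact lt_irrefl 0 h

/-- extraction: positive coordinate of a product comes from positive pieces -/
lemma E_mul_pos {x y : R} (hx : NN BR x) (hy : NN BR y) {k : ι}
    (h : 0 < E BR (x * y) k) :
    ∃ m n, 0 < E BR x m ∧ 0 < E BR y n ∧ 0 < cf BR m n k := by
  rw [E_mul] at h
  obtain ⟨m, -, hm⟩ := exists_pos_of_sum_pos h
  obtain ⟨n, -, hn⟩ := exists_pos_of_sum_pos hm
  have h1 := pos_factors (mul_nonneg (hx m) (hy n)) (cf_nonneg BR m n k) hn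
  have h2 := pos_factors (hx m) (hy n) h1.1
  exact ⟨m, n, h2.1, h2.2, h1.2⟩

/-- converse: build positivity of a product coordinate -/
lemma pos_E_mul {x y : R} (hx : NN BR x) (hy : NN BR y) {m n k : ι}
    (hm : 0 < E BR x m) (hn : 0 < E BR y n) (hc : 0 < cf BR m n k) :
    0 < E BR (x * y) k := by
  rw [E_mul]
  have hterm : 0 < E BR x m * E BR y n * cf BR m n k :=
    mul_pos (mul_pos hm hn) hc
  have hinner : E BR x m * E BR y n * cf BR m n k
      ≤ ∑ n' : ι, E BR x m * E BR y n' * cf BR m n' k := by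
    apply Finset.single_le_sum (f := fun n' => E BR x m * E BR y n' * cf BR m n' k)
      (fun n' _ => mul_nonneg (mul_nonneg (hx m) (hy n')) (cf_nonneg BR m n' k))
      (Finset.mem_univ n)
  have houter : (∑ n' : ι, E BR x m * E BR y n' * cf BR m n' k)
      ≤ ∑ m' : ι, ∑ n' : ι, E BR x m' * E BR y n' * cf BR m' n' k := by
    apply Finset.single_le_sum
      (f := fun m' => ∑ n' : ι, E BR x m' * E BR y n' * cf BR m' n' k)
      (fun m' _ => Finset.sum_nonneg fun n' _ =>
        mul_nonneg (mul_nonneg (hx m') (hy n')) (cf_nonneg BR m' n' k))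
      (Finset.mem_univ m)
  exact lt_of_lt_of_le (lt_of_lt_of_le hterm hinner) houter

end BRAux

namespace BRAux

open Finset

variable {ι R : Type*} [Fintype ι] [DecidableEq ι] [Ring R] (BR : BasedRing ι R)

/-- the element `I(C) = Σ_{c ∈ C} X_c X_{c*}` -/
noncomputable def IC (C : Finset ι) : R := ∑ c ∈ C, BR.b c * BR.b (BR.star c)

lemma E_IC (C : Finset ι) (k : ι) :
    E BR (IC BR C) k = ∑ c ∈ C, cf BR c (BR.star c) k := by
  rw [IC, E_sum]; rfl

lemma NN_IC (C : Finset ι) : NN BR (IC BR C) :=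
  NN_sum BR fun c _ => NN_mul BR (NN_b BR c) (NN_b BR _)

lemma mem_adOf_iff (C : Finset ι) (k : ι) :
    k ∈ BR.adOf C ↔ ∃ N : ℕ, 0 < E BR (IC BR C ^ (N + 1)) k := by
  have h0 : k ∈ BR.adOf C ↔ ∃ n : ℕ, 1 ≤ n ∧
      BR.contains ((∑ i ∈ C, BR.b i * BR.b (BR.star i)) ^ n) k := by
    classical
    simp [BasedRing.adOf]
  rw [h0]
  constructor
  · rintro ⟨n, hn, h⟩
    refine ⟨n - 1, ?_⟩
    have he : n - 1 + 1 = n := Nat.succ_pred_eq_of_pos hn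
    rw [he]
    exact h
  · rintro ⟨N, h⟩
    exact ⟨N + 1, Nat.le_add_left 1 N, h⟩

/-- a "closed" subset: based subring -/
structure IsClosed (C : Finset ι) : Prop where
  unit_mem : BR.unit ∈ C
  star_mem : ∀ c ∈ C, BR.star c ∈ C
  mul_mem : ∀ c ∈ C, ∀ c' ∈ C, ∀ k, 0 < cf BR c c' k → k ∈ C

lemma isClosed_univ : IsClosed BR (Finset.univ : Finset ι) :=
  ⟨Finset.mem_univ _, fun c _ => Finset.mem_univ _, fun _ _ _ _ k _ => Finset.mem_univ k⟩

variable {C : Finset ι}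

lemma E_IC_pos_mem (hC : IsClosed BR C) {k : ι} (h : 0 < E BR (IC BR C) k) : k ∈ C := by
  rw [E_IC] at h
  obtain ⟨c, hc, hpos⟩ := exists_pos_of_sum_pos h
  exact hC.mul_mem c hc _ (hC.star_mem c hc) k hpos

lemma E_IC_pow_pos_mem (hC : IsClosed BR C) :
    ∀ N {k : ι}, 0 < E BR (IC BR C ^ (N + 1)) k → k ∈ C := by
  intro N
  induction N with
  | zero => intro k h; rw [pow_one] at h; exact E_IC_pos_mem BR hC h
  | succ n ih =>
    intro k h
    rw [pow_succ] at h
    obtain ⟨m, n', hm, hn', hc⟩ :=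
      E_mul_pos BR (NN_pow BR (NN_IC BR C) _) (NN_IC BR C) h
    exact hC.mul_mem m (ih hm) n' (E_IC_pos_mem BR hC hn') k hc

lemma adOf_sub (hC : IsClosed BR C) {k : ι} (h : k ∈ BR.adOf C) : k ∈ C := by
  obtain ⟨N, hN⟩ := (mem_adOf_iff BR C k).mp h
  exact E_IC_pow_pos_mem BR hC N hN

lemma unit_mem_adOf (hC : IsClosed BR C) : BR.unit ∈ BR.adOf C := by
  rw [mem_adOf_iff]
  refine ⟨0, ?_⟩
  rw [pow_one, E_IC]
  have : 0 < cf BR BR.unit (BR.star BR.unit) BR.unit := by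
    rw [star_unit, cf_unit_left, if_pos rfl]; norm_num
  calc (0:ℤ) < cf BR BR.unit (BR.star BR.unit) BR.unit := this
    _ ≤ ∑ c ∈ C, cf BR c (BR.star c) BR.unit :=
      Finset.single_le_sum (fun c _ => cf_nonneg BR c _ _) hC.unit_mem

lemma adOf_mul_mem {a b' k : ι} (ha : a ∈ BR.adOf C) (hb : b' ∈ BR.adOf C)
    (h : 0 < cf BR a b' k) : k ∈ BR.adOf C := by
  rw [mem_adOf_iff] at ha hb ⊢
  obtain ⟨Na, hNa⟩ := ha
  obtain ⟨Nb, hNb⟩ := hb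
  refine ⟨Na + Nb + 1, ?_⟩
  have : IC BR C ^ (Na + Nb + 1 + 1) = IC BR C ^ (Na + 1) * IC BR C ^ (Nb + 1) := by
    rw [← pow_add]; ring_nf
  rw [this]
  exact pos_E_mul BR (NN_pow BR (NN_IC BR C) _) (NN_pow BR (NN_IC BR C) _) hNa hNb h

lemma E_IC_star (C : Finset ι) (k : ι) :
    E BR (IC BR C) (BR.star k) = E BR (IC BR C) k := by
  rw [E_IC, E_IC]
  refine Finset.sum_congr rfl fun c _ => ?_
  conv_rhs => rw [cf_sigma, BR.star_invol]

lemma E_IC_pow_star (C : Finset ι) : ∀ (N : ℕ) (k : ι),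
    E BR (IC BR C ^ N) (BR.star k) = E BR (IC BR C ^ N) k := by
  intro N
  induction N with
  | zero =>
    intro k
    rw [pow_zero, E_one, E_one]
    by_cases h : BR.unit = k
    · rw [if_pos, if_pos h]; rw [← h, star_unit]
    · rw [if_neg, if_neg h]; intro hc; apply h
      rw [← BR.star_invol k, ← hc, star_unit]
  | succ n ih =>
    intro k
    have key : E BR (IC BR C ^ (n+1)) k = E BR (IC BR C ^ (n+1)) (BR.star k) := by
      conv_lhs => rw [pow_succ, E_mul]
      conv_rhs => rw [pow_succ', E_mul]
      have h1 : ∀ m n', E BR (IC BR C ^ n) m * E BR (IC BR C) n' * cf BR m n' k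
          = E BR (IC BR C ^ n) (BR.star m) * E BR (IC BR C) (BR.star n') *
            cf BR (BR.star n') (BR.star m) (BR.star k) := by
        intro m n'
        rw [ih, E_IC_star, cf_sigma BR m n' k]
      calc (∑ m : ι, ∑ n' : ι, E BR (IC BR C ^ n) m * E BR (IC BR C) n' * cf BR m n' k)
          = ∑ m : ι, ∑ n' : ι, E BR (IC BR C ^ n) (BR.star m) * E BR (IC BR C) (BR.star n')
              * cf BR (BR.star n') (BR.star m) (BR.star k) :=
            Finset.sum_congr rfl fun m _ => Finset.sum_congr rfl fun n' _ => h1 m n'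
        _ = ∑ m : ι, ∑ n' : ι, E BR (IC BR C ^ n) m * E BR (IC BR C) n'
              * cf BR n' m (BR.star k) :=
            Fintype.sum_bijective BR.star (Function.Involutive.bijective BR.star_invol) _ _
              (fun m => Fintype.sum_bijective BR.star
                (Function.Involutive.bijective BR.star_invol) _ _ (fun n' => rfl))
        _ = ∑ n' : ι, ∑ m : ι, E BR (IC BR C) n' * E BR (IC BR C ^ n) m
              * cf BR n' m (BR.star k) := by
            rw [Finset.sum_comm]
            exact Finset.sum_congr rfl fun n' _ => Finset.sum_congr rfl fun m _ => by ring
    exact key.symm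
end BRAux

namespace BRAux

open Finset

variable {ι R : Type*} [Fintype ι] [DecidableEq ι] [Ring R] (BR : BasedRing ι R)
variable {C : Finset ι}

lemma adOf_star_mem {a : ι} (ha : a ∈ BR.adOf C) : BR.star a ∈ BR.adOf C := by
  rw [mem_adOf_iff] at ha ⊢
  obtain ⟨N, hN⟩ := ha
  exact ⟨N, by rw [E_IC_pow_star]; exact hN⟩

lemma adOf_closed (hC : IsClosed BR C) : IsClosed BR (BR.adOf C) :=
  ⟨unit_mem_adOf BR hC, fun a ha => adOf_star_mem BR ha,
    fun a ha b hb k h => adOf_mul_mem BR ha hb h⟩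

open Classical in
/-- orbit of `j` under right multiplication by elements of `C` -/
noncomputable def Orb (C : Finset ι) (j : ι) : Finset ι :=
  Finset.univ.filter fun k => ∃ c ∈ C, 0 < cf BR j c k

lemma mem_Orb {j k : ι} : k ∈ Orb BR C j ↔ ∃ c ∈ C, 0 < cf BR j c k := by
  classical
  simp [Orb]

lemma self_mem_Orb (hu : BR.unit ∈ C) (j : ι) : j ∈ Orb BR C j := by
  rw [mem_Orb]
  exact ⟨BR.unit, hu, by rw [cf_unit_right, if_pos rfl]; norm_num⟩

lemma Orb_trans (hC : IsClosed BR C) {j x y c : ι} (hx : x ∈ Orb BR C j)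
    (hc : c ∈ C) (h : 0 < cf BR x c y) : y ∈ Orb BR C j := by
  obtain ⟨c₀, hc₀, h₀⟩ := (mem_Orb BR).mp hx
  have hprod : 0 < E BR (BR.b j * BR.b c₀ * BR.b c) y :=
    pos_E_mul BR (NN_mul BR (NN_b BR j) (NN_b BR c₀)) (NN_b BR c) h₀ (E_b_pos BR c) h
  rw [mul_assoc] at hprod
  obtain ⟨m, n, hm, hn, hcf⟩ :=
    E_mul_pos BR (NN_b BR j) (NN_mul BR (NN_b BR c₀) (NN_b BR c)) hprod
  rw [E_b_pos_iff] at hm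
  subst hm
  exact (mem_Orb BR).mpr ⟨n, hC.mul_mem c₀ hc₀ c hc n hn, hcf⟩

lemma Orb_symm (hC : IsClosed BR C) {j x : ι} (hx : x ∈ Orb BR C j) :
    j ∈ Orb BR C x := by
  obtain ⟨c, hc, h⟩ := (mem_Orb BR).mp hx
  rw [adjR] at h
  exact (mem_Orb BR).mpr ⟨BR.star c, hC.star_mem c hc, h⟩

lemma Orb_eq_of_mem (hC : IsClosed BR C) {j x : ι} (hx : x ∈ Orb BR C j) :
    Orb BR C x = Orb BR C j := by
  ext k
  constructor
  · intro hk
    obtain ⟨c, hc, h⟩ := (mem_Orb BR).mp hk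
    exact Orb_trans BR hC hx hc h
  · intro hk
    obtain ⟨c, hc, h⟩ := (mem_Orb BR).mp hk
    exact Orb_trans BR hC (Orb_symm BR hC hx) hc h

/-- Lemma E: two elements appearing in the same product `X_p X_w` (with `w ∈ C`)
are in the same right `adOf C`-orbit. -/
lemma lemE (hC : IsClosed BR C) {p w x y : ι} (hw : w ∈ C)
    (hx : 0 < cf BR p w x) (hy : 0 < cf BR p w y) :
    ∃ s ∈ BR.adOf C, 0 < cf BR x s y := by
  have hx' : 0 < cf BR x (BR.star w) p := by rw [← adjR]; exact hx
  have hprod : 0 < E BR (BR.b x * BR.b (BR.star w) * BR.b w) y :=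
    pos_E_mul BR (NN_mul BR (NN_b BR x) (NN_b BR _)) (NN_b BR w) hx' (E_b_pos BR w) hy
  rw [mul_assoc] at hprod
  obtain ⟨m, s, hm, hs, hcf⟩ :=
    E_mul_pos BR (NN_b BR x) (NN_mul BR (NN_b BR _) (NN_b BR w)) hprod
  rw [E_b_pos_iff] at hm
  subst hm
  refine ⟨s, ?_, hcf⟩
  rw [mem_adOf_iff]
  refine ⟨0, ?_⟩
  rw [pow_one, E_IC]
  have hterm : 0 < cf BR (BR.star w) (BR.star (BR.star w)) s := by
    rw [BR.star_invol]
    exact hs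
  calc (0:ℤ) < cf BR (BR.star w) (BR.star (BR.star w)) s := hterm
    _ ≤ ∑ c ∈ C, cf BR c (BR.star c) s :=
      Finset.single_le_sum (fun c _ => cf_nonneg BR c _ _) (hC.star_mem w hw)

lemma reach_sub (hC : IsClosed BR C) {c : ι} (hc : c ∈ C) :
    ∀ N {x : ι}, 0 < E BR (IC BR C ^ N * BR.b c) x → x ∈ C := by
  intro N
  induction N with
  | zero =>
    intro x h
    rw [pow_zero, one_mul, E_b] at h
    split at h
    · next he => rw [← he]; exact hc
    · exact absurd h (lt_irrefl 0)
  | succ n ih =>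
    intro x h
    rw [pow_succ', mul_assoc] at h
    obtain ⟨m, n', hm, hn', hcf⟩ := E_mul_pos BR (NN_IC BR C)
      (NN_mul BR (NN_pow BR (NN_IC BR C) n) (NN_b BR c)) h
    exact hC.mul_mem m (E_IC_pos_mem BR hC hm) n' (ih hn') x hcf

/-- the left-to-right lemma: anything reachable from `c ∈ C` by left multiplication
by powers of `I_C` is in the right `adOf C`-orbit of `c`. -/
lemma LRchain (hC : IsClosed BR C) {c : ι} (hc : c ∈ C) :
    ∀ N {q : ι}, 0 < E BR (IC BR C ^ N * BR.b c) q →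
      ∃ p ∈ BR.adOf C, 0 < cf BR c p q := by
  intro N
  induction N with
  | zero =>
    intro q h
    rw [pow_zero, one_mul, E_b] at h
    split at h
    · next he =>
      refine ⟨BR.unit, unit_mem_adOf BR hC, ?_⟩
      rw [cf_unit_right, he, if_pos rfl]
      norm_num
    · exact absurd h (lt_irrefl 0)
  | succ n ih =>
    intro q h
    rw [pow_succ', mul_assoc] at h
    obtain ⟨m, m', hm, hm', hcf⟩ := E_mul_pos BR (NN_IC BR C)
      (NN_mul BR (NN_pow BR (NN_IC BR C) n) (NN_b BR c)) h
    -- m ∈ supp IC : get w ∈ C with 0 < cf w (star w) m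
    rw [E_IC] at hm
    obtain ⟨w, hw, hwm⟩ := exists_pos_of_sum_pos hm
    -- q ∈ supp ((bw * b(star w)) * b m')
    have h1 : 0 < E BR (BR.b w * BR.b (BR.star w) * BR.b m') q :=
      pos_E_mul BR (NN_mul BR (NN_b BR w) (NN_b BR _)) (NN_b BR m') hwm (E_b_pos BR m') hcf
    rw [mul_assoc] at h1
    obtain ⟨w₁, v, hw₁, hv, hcfq⟩ :=
      E_mul_pos BR (NN_b BR w) (NN_mul BR (NN_b BR _) (NN_b BR m')) h1
    rw [E_b_pos_iff] at hw₁
    subst hw₁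
    -- v-trick : 0 < cf w v m'
    have hvm' : 0 < cf BR w v m' := by
      have : 0 < cf BR (BR.star w) m' v := hv
      rw [adjL, BR.star_invol] at this
      exact this
    -- v ∈ C
    have hm'C : m' ∈ C := reach_sub BR hC hc n hm'
    have hvC : v ∈ C := hC.mul_mem (BR.star w) (hC.star_mem w hw) m' hm'C v hv
    -- lemE : m' and q are in same orbit
    obtain ⟨s, hsA, hs⟩ := lemE BR hC hvC hvm' hcfq
    -- induction hypothesis on m'
    obtain ⟨p, hpA, hp⟩ := ih hm'
    -- combine: q ∈ supp ((b c * b p) * b s)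
    have h2 : 0 < E BR (BR.b c * BR.b p * BR.b s) q :=
      pos_E_mul BR (NN_mul BR (NN_b BR c) (NN_b BR p)) (NN_b BR s) hp (E_b_pos BR s) hs
    rw [mul_assoc] at h2
    obtain ⟨m₂, p', hm₂, hp', hcf'⟩ :=
      E_mul_pos BR (NN_b BR c) (NN_mul BR (NN_b BR p) (NN_b BR s)) h2
    rw [E_b_pos_iff] at hm₂
    subst hm₂
    exact ⟨p', adOf_mul_mem BR hpA hsA hp', hcf'⟩

end BRAux

namespace BRAux

open Finset

variable {ι R : Type*} [Fintype ι] [DecidableEq ι] [Ring R] (BR : BasedRing ι R)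
variable {C : Finset ι}

/-- Claim C (transport closure): if `j' ∈ supp(X_j X_c)`, `m` is in the right
`adOf C`-orbit of `j`, and `y ∈ supp(X_m X_c)`, then `y` is in the right
`adOf C`-orbit of `j'`. -/
lemma claimC (hC : IsClosed BR C) {c j j' m y : ι} (hc : c ∈ C)
    (hj' : 0 < cf BR j c j') (hm : ∃ a ∈ BR.adOf C, 0 < cf BR j a m)
    (hy : 0 < cf BR m c y) :
    ∃ s ∈ BR.adOf C, 0 < cf BR j' s y := by
  obtain ⟨a, haA, hjam⟩ := hm
  obtain ⟨N, hNa⟩ := (mem_adOf_iff BR C a).mp haA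
  -- y ∈ supp((b j * b a) * b c), extract q with q ∈ supp(b a * b c), y ∈ supp(b j * b q)
  have h1 : 0 < E BR (BR.b j * BR.b a * BR.b c) y :=
    pos_E_mul BR (NN_mul BR (NN_b BR j) (NN_b BR a)) (NN_b BR c) hjam (E_b_pos BR c) hy
  rw [mul_assoc] at h1
  obtain ⟨m₁, q, hm₁, hq, hjq⟩ :=
    E_mul_pos BR (NN_b BR j) (NN_mul BR (NN_b BR a) (NN_b BR c)) h1
  rw [E_b_pos_iff] at hm₁
  subst hm₁
  -- q ∈ supp(IC^(N+1) * b c)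
  have hq2 : 0 < E BR (IC BR C ^ (N + 1) * BR.b c) q :=
    pos_E_mul BR (NN_pow BR (NN_IC BR C) _) (NN_b BR c) hNa (E_b_pos BR c) hq
  obtain ⟨p, hpA, hcp⟩ := LRchain BR hC hc (N + 1) hq2
  -- y ∈ supp((b j * b c) * b p) : extract z
  have h2 : 0 < E BR (BR.b j * (BR.b c * BR.b p)) y :=
    pos_E_mul BR (NN_b BR j) (NN_mul BR (NN_b BR c) (NN_b BR p)) (E_b_pos BR j) hcp hjq
  rw [← mul_assoc] at h2
  obtain ⟨z, p₁, hz, hp₁, hzp⟩ :=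
    E_mul_pos BR (NN_mul BR (NN_b BR j) (NN_b BR c)) (NN_b BR p) h2
  rw [E_b_pos_iff] at hp₁
  subst hp₁
  -- z and j' both in supp(b j * b c) : lemE
  obtain ⟨s₁, hs₁A, hs₁⟩ := lemE BR hC hc hj' hz
  -- combine : y ∈ supp((b j' * b s₁) * b p)
  have h3 : 0 < E BR (BR.b j' * BR.b s₁ * BR.b p) y :=
    pos_E_mul BR (NN_mul BR (NN_b BR j') (NN_b BR s₁)) (NN_b BR p) hs₁ (E_b_pos BR p) hzp
  rw [mul_assoc] at h3
  obtain ⟨m₂, s, hm₂, hs, hcf⟩ :=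
    E_mul_pos BR (NN_b BR j') (NN_mul BR (NN_b BR s₁) (NN_b BR p)) h3
  rw [E_b_pos_iff] at hm₂
  subst hm₂
  exact ⟨s, adOf_mul_mem BR hs₁A hpA hs, hcf⟩

end BRAux

namespace BRAux

open Finset

variable {ι R : Type*} [Fintype ι] [DecidableEq ι] [Ring R] (BR : BasedRing ι R)
variable (f : R →+* ℝ) (hf : ∀ i, 0 < f (BR.b i))
variable {C : Finset ι}

lemma f_expand (x : R) : f x = ∑ k : ι, (E BR x k : ℝ) * f (BR.b k) := by
  conv_lhs => rw [← BR.b.sum_repr x]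
  rw [map_sum]
  refine Finset.sum_congr rfl fun k _ => ?_
  rw [map_zsmul, zsmul_eq_mul]
  rfl

lemma f_cf (i j : ι) :
    (∑ k : ι, (cf BR i j k : ℝ) * f (BR.b k)) = f (BR.b i) * f (BR.b j) := by
  rw [← map_mul]
  exact (f_expand BR f _).symm

include hf in
/-- `FPdim` is star-invariant on closed subsets. -/
lemma d_star (hC : IsClosed BR C) {c : ι} (hc : c ∈ C) :
    f (BR.b (BR.star c)) = f (BR.b c) := by
  have key : ∀ k : ι, (∑ p ∈ C, f (BR.b p) * (cf BR c p k : ℝ))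
      = if k ∈ C then f (BR.b (BR.star c)) * f (BR.b k) else 0 := by
    intro k
    by_cases hk : k ∈ C
    · rw [if_pos hk]
      have ha : ∀ p, cf BR c p k = cf BR (BR.star c) k p := fun p => adjL BR c p k
      have hzero : ∀ p ∈ (Finset.univ : Finset ι), p ∉ C →
          f (BR.b p) * (cf BR (BR.star c) k p : ℝ) = 0 := by
        intro p _ hp
        have : cf BR (BR.star c) k p = 0 := by
          by_contra hne
          have hpos : 0 < cf BR (BR.star c) k p :=
            lt_of_le_of_ne (cf_nonneg BR _ _ _) (Ne.symm hne)
          exact hp (hC.mul_mem _ (hC.star_mem c hc) k hk p hpos)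
        rw [this]; norm_num
      calc (∑ p ∈ C, f (BR.b p) * (cf BR c p k : ℝ))
          = ∑ p ∈ C, f (BR.b p) * (cf BR (BR.star c) k p : ℝ) :=
            Finset.sum_congr rfl fun p _ => by rw [ha p]
        _ = ∑ p : ι, f (BR.b p) * (cf BR (BR.star c) k p : ℝ) :=
            Finset.sum_subset (Finset.subset_univ C)
              (fun p hp hpc => hzero p hp hpc)
        _ = ∑ p : ι, (cf BR (BR.star c) k p : ℝ) * f (BR.b p) :=
            Finset.sum_congr rfl fun p _ => mul_comm _ _
        _ = f (BR.b (BR.star c)) * f (BR.b k) := f_cf BR f _ _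
    · rw [if_neg hk]
      refine Finset.sum_eq_zero fun p hp => ?_
      have : cf BR c p k = 0 := by
        by_contra hne
        have hpos : 0 < cf BR c p k :=
          lt_of_le_of_ne (cf_nonneg BR _ _ _) (Ne.symm hne)
        exact hk (hC.mul_mem c hc p hp k hpos)
      rw [this]; norm_num
  have main : (∑ k : ι, (∑ p ∈ C, f (BR.b p) * (cf BR c p k : ℝ)) * f (BR.b k))
      = f (BR.b (BR.star c)) * ∑ k ∈ C, f (BR.b k) ^ 2 := by
    have h1 : (∑ k : ι, (∑ p ∈ C, f (BR.b p) * (cf BR c p k : ℝ)) * f (BR.b k))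
        = ∑ k : ι, (if k ∈ C then f (BR.b (BR.star c)) * f (BR.b k) ^ 2 else 0) := by
      refine Finset.sum_congr rfl fun k _ => ?_
      rw [key k]
      split
      · ring
      · rw [zero_mul]
    rw [h1, ← Finset.sum_filter, Finset.filter_mem_eq_inter, Finset.univ_inter,
      Finset.mul_sum]
  have main2 : (∑ k : ι, (∑ p ∈ C, f (BR.b p) * (cf BR c p k : ℝ)) * f (BR.b k))
      = f (BR.b c) * ∑ p ∈ C, f (BR.b p) ^ 2 := by
    calc (∑ k : ι, (∑ p ∈ C, f (BR.b p) * (cf BR c p k : ℝ)) * f (BR.b k))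
        = ∑ k : ι, ∑ p ∈ C, f (BR.b p) * (cf BR c p k : ℝ) * f (BR.b k) :=
          Finset.sum_congr rfl fun k _ => by rw [Finset.sum_mul]
      _ = ∑ p ∈ C, ∑ k : ι, f (BR.b p) * (cf BR c p k : ℝ) * f (BR.b k) :=
          Finset.sum_comm
      _ = ∑ p ∈ C, f (BR.b p) * (∑ k : ι, (cf BR c p k : ℝ) * f (BR.b k)) := by
          refine Finset.sum_congr rfl fun p _ => ?_
          rw [Finset.mul_sum]
          refine Finset.sum_congr rfl fun k _ => by ring
      _ = ∑ p ∈ C, f (BR.b p) * (f (BR.b c) * f (BR.b p)) :=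
          Finset.sum_congr rfl fun p _ => by rw [f_cf BR f c p]
      _ = f (BR.b c) * ∑ p ∈ C, f (BR.b p) ^ 2 := by
          rw [Finset.mul_sum]
          exact Finset.sum_congr rfl fun p _ => by ring
  have hpos : 0 < ∑ p ∈ C, f (BR.b p) ^ 2 := by
    refine Finset.sum_pos' (fun p _ => sq_nonneg _) ⟨BR.unit, hC.unit_mem, ?_⟩
    exact pow_pos (hf BR.unit) 2
  have := main.symm.trans main2
  exact mul_right_cancel₀ (ne_of_gt hpos) this

include hf in
/-- mass transport along a `C`-step -/
lemma transport (hC : IsClosed BR C) {c j j' : ι} (hc : c ∈ C)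
    (h : 0 < cf BR j c j') :
    (∑ k ∈ Orb BR (BR.adOf C) j', f (BR.b k) ^ 2)
      = ∑ k ∈ Orb BR (BR.adOf C) j, f (BR.b k) ^ 2 := by
  set A' := BR.adOf C with hA'def
  have hsym : 0 < cf BR j' (BR.star c) j := by rw [← adjR]; exact h
  have hbd : ∀ m ∈ Orb BR A' j, ∀ y, 0 < cf BR m c y → y ∈ Orb BR A' j' := by
    intro m hm y hy
    exact (mem_Orb BR).mpr (claimC BR hC hc h ((mem_Orb BR).mp hm) hy)
  have hcd : ∀ m' ∈ Orb BR A' j', ∀ y, 0 < cf BR m' (BR.star c) y → y ∈ Orb BR A' j := by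
    intro m' hm' y hy
    exact (mem_Orb BR).mpr
      (claimC BR hC (hC.star_mem c hc) hsym ((mem_Orb BR).mp hm') hy)
  have K2 : ∀ m' ∈ Orb BR A' j',
      (∑ m ∈ Orb BR A' j, f (BR.b m) * (cf BR m c m' : ℝ))
        = f (BR.b m') * f (BR.b c) := by
    intro m' hm'
    have ha : ∀ m, cf BR m c m' = cf BR m' (BR.star c) m := fun m => adjR BR m c m'
    calc (∑ m ∈ Orb BR A' j, f (BR.b m) * (cf BR m c m' : ℝ))
        = ∑ m ∈ Orb BR A' j, f (BR.b m) * (cf BR m' (BR.star c) m : ℝ) :=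
          Finset.sum_congr rfl fun m _ => by rw [ha m]
      _ = ∑ m : ι, f (BR.b m) * (cf BR m' (BR.star c) m : ℝ) := by
          refine Finset.sum_subset (Finset.subset_univ _) fun m _ hm => ?_
          have : cf BR m' (BR.star c) m = 0 := by
            by_contra hne
            have hpos : 0 < cf BR m' (BR.star c) m :=
              lt_of_le_of_ne (cf_nonneg BR _ _ _) (Ne.symm hne)
            exact hm (hcd m' hm' m hpos)
          rw [this]; norm_num
      _ = ∑ m : ι, (cf BR m' (BR.star c) m : ℝ) * f (BR.b m) :=
          Finset.sum_congr rfl fun m _ => mul_comm _ _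
      _ = f (BR.b m') * f (BR.b (BR.star c)) := f_cf BR f _ _
      _ = f (BR.b m') * f (BR.b c) := by rw [d_star BR f hf hC hc]
  have K3 : ∀ m' : ι, m' ∉ Orb BR A' j' →
      (∑ m ∈ Orb BR A' j, f (BR.b m) * (cf BR m c m' : ℝ)) = 0 := by
    intro m' hm'
    refine Finset.sum_eq_zero fun m hm => ?_
    have : cf BR m c m' = 0 := by
      by_contra hne
      have hpos : 0 < cf BR m c m' :=
        lt_of_le_of_ne (cf_nonneg BR _ _ _) (Ne.symm hne)
      exact hm' (hbd m hm m' hpos)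
    rw [this]; norm_num
  have main : f (BR.b c) * ∑ m ∈ Orb BR A' j, f (BR.b m) ^ 2
      = f (BR.b c) * ∑ m' ∈ Orb BR A' j', f (BR.b m') ^ 2 := by
    calc f (BR.b c) * ∑ m ∈ Orb BR A' j, f (BR.b m) ^ 2
        = ∑ m ∈ Orb BR A' j, f (BR.b m) * (f (BR.b m) * f (BR.b c)) := by
          rw [Finset.mul_sum]
          exact Finset.sum_congr rfl fun m _ => by ring
      _ = ∑ m ∈ Orb BR A' j, f (BR.b m) * (∑ m' : ι, (cf BR m c m' : ℝ) * f (BR.b m')) :=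
          Finset.sum_congr rfl fun m _ => by rw [f_cf BR f m c]
      _ = ∑ m ∈ Orb BR A' j, ∑ m' : ι, f (BR.b m) * ((cf BR m c m' : ℝ) * f (BR.b m')) :=
          Finset.sum_congr rfl fun m _ => by rw [Finset.mul_sum]
      _ = ∑ m' : ι, ∑ m ∈ Orb BR A' j, f (BR.b m) * ((cf BR m c m' : ℝ) * f (BR.b m')) :=
          Finset.sum_comm
      _ = ∑ m' : ι, (∑ m ∈ Orb BR A' j, f (BR.b m) * (cf BR m c m' : ℝ)) * f (BR.b m') := by
          refine Finset.sum_congr rfl fun m' _ => ?_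
          rw [Finset.sum_mul]
          exact Finset.sum_congr rfl fun m _ => by ring
      _ = ∑ m' ∈ Orb BR A' j', (∑ m ∈ Orb BR A' j, f (BR.b m) * (cf BR m c m' : ℝ))
            * f (BR.b m') := by
          refine (Finset.sum_subset (Finset.subset_univ _) fun m' _ hm' => ?_).symm
          rw [K3 m' hm']; norm_num
      _ = ∑ m' ∈ Orb BR A' j', (f (BR.b m') * f (BR.b c)) * f (BR.b m') :=
          Finset.sum_congr rfl fun m' hm' => by rw [K2 m' hm']
      _ = f (BR.b c) * ∑ m' ∈ Orb BR A' j', f (BR.b m') ^ 2 := by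
          rw [Finset.mul_sum]
          exact Finset.sum_congr rfl fun m' _ => by ring
  exact (mul_left_cancel₀ (ne_of_gt (hf c)) main).symm

end BRAux

namespace BRAux

open Finset

variable {ι R : Type*} [Fintype ι] [DecidableEq ι] [Ring R] (BR : BasedRing ι R)
variable (f : R →+* ℝ) (hf : ∀ i, 0 < f (BR.b i))

lemma upperOf_succ_eq (C : Finset ι) :
    ∀ n, BR.upperOf C (n + 1) = BR.upperOf (BR.adOf C) n := by
  intro n
  induction n with
  | zero => rfl
  | succ n ih =>
    show BR.adOf (BR.upperOf C (n + 1)) = BR.adOf (BR.upperOf (BR.adOf C) n)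
    rw [ih]

include hf in
lemma Pmain : ∀ (n : ℕ) (C : Finset ι), IsClosed BR C →
    BR.upperOf C n = {BR.unit} → ∀ j : ι, ∃ m : ℤ,
      (∑ k ∈ Orb BR C j, f (BR.b k) ^ 2) = (m : ℝ) * f (BR.b j) ^ 2 := by
  intro n
  induction n with
  | zero =>
    intro C hC h0 j
    have hC1 : C = {BR.unit} := h0
    refine ⟨1, ?_⟩
    have horb : Orb BR C j = {j} := by
      ext k
      rw [mem_Orb, hC1]
      constructor
      · rintro ⟨c, hc, hcf⟩
        rw [Finset.mem_singleton] at hc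
        subst hc
        rw [cf_unit_right] at hcf
        split at hcf
        · next he => rw [Finset.mem_singleton, he]
        · exact absurd hcf (lt_irrefl 0)
      · intro hk
        rw [Finset.mem_singleton] at hk
        subst hk
        exact ⟨BR.unit, Finset.mem_singleton_self _, by
          rw [cf_unit_right, if_pos rfl]; norm_num⟩
    rw [horb, Finset.sum_singleton, Int.cast_one, one_mul]
  | succ n ih =>
    intro C hC hup j
    have hA' : IsClosed BR (BR.adOf C) := adOf_closed BR hC
    have hshift : BR.upperOf (BR.adOf C) n = {BR.unit} := by
      rw [← upperOf_succ_eq]; exact hup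
    obtain ⟨m', hm'⟩ := ih (BR.adOf C) hA' hshift j
    have htr : ∀ x ∈ Orb BR C j,
        (∑ k ∈ Orb BR (BR.adOf C) x, f (BR.b k) ^ 2)
          = ∑ k ∈ Orb BR (BR.adOf C) j, f (BR.b k) ^ 2 := by
      intro x hx
      obtain ⟨c, hc, hcf⟩ := (mem_Orb BR).mp hx
      exact transport BR f hf hC hc hcf
    classical
    have hfib : ∀ x ∈ Orb BR C j,
        (Orb BR C j).filter (fun y => Orb BR (BR.adOf C) y = Orb BR (BR.adOf C) x)
          = Orb BR (BR.adOf C) x := by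
      intro x hx
      ext y
      rw [Finset.mem_filter]
      constructor
      · rintro ⟨hyΩ, hyx⟩
        rw [← hyx]
        exact self_mem_Orb BR hA'.unit_mem y
      · intro hyφ
        refine ⟨?_, Orb_eq_of_mem BR hA' hyφ⟩
        obtain ⟨a, haA, hcf⟩ := (mem_Orb BR).mp hyφ
        exact Orb_trans BR hC hx (adOf_sub BR hC haA) hcf
    have hsplit : (∑ k ∈ Orb BR C j, f (BR.b k) ^ 2)
        = ∑ O ∈ (Orb BR C j).image (fun y => Orb BR (BR.adOf C) y),
            ∑ k ∈ (Orb BR C j).filter (fun y => Orb BR (BR.adOf C) y = O),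
              f (BR.b k) ^ 2 :=
      (Finset.sum_fiberwise_of_maps_to
        (fun x hx => Finset.mem_image_of_mem _ hx) _).symm
    refine ⟨((Orb BR C j).image (fun y => Orb BR (BR.adOf C) y)).card * m', ?_⟩
    rw [hsplit]
    have heach : ∀ O ∈ (Orb BR C j).image (fun y => Orb BR (BR.adOf C) y),
        (∑ k ∈ (Orb BR C j).filter (fun y => Orb BR (BR.adOf C) y = O),
          f (BR.b k) ^ 2) = (m' : ℝ) * f (BR.b j) ^ 2 := by
      intro O hO
      obtain ⟨x, hx, rfl⟩ := Finset.mem_image.mp hO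
      rw [hfib x hx, htr x hx, hm']
    rw [Finset.sum_congr rfl heach, Finset.sum_const, nsmul_eq_mul]
    push_cast
    ring

end BRAux


/-- Let `R` be a nilpotent based ring and `f = FPdim : R → ℝ` the
ring homomorphism positive on basic elements. Then for every basic element `X`
of `R`, the ratio `FPdim(R_ad)/FPdim(X)²` is an integer, where
`FPdim(R_ad) = Σ FPdim(Y)²`, the sum being over the basic elements `Y` lying in
`R_ad`. -/
theorem fpdim_sq_dvd_fpdim_ad {ι R : Type*} [Fintype ι] [DecidableEq ι]
    [Ring R] (BR : BasedRing ι R)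
    (hnil : ∃ n : ℕ, BR.upperOf Finset.univ n = {BR.unit})
    (f : R →+* ℝ) (hf : ∀ i, 0 < f (BR.b i)) :
    ∀ i : ι, ∃ m : ℤ,
      (∑ k ∈ BR.adOf Finset.univ, (f (BR.b k)) ^ 2) = (m : ℝ) * (f (BR.b i)) ^ 2 := by
  intro i
  open BRAux in
  obtain ⟨n, hn⟩ := hnil
  have hU : BRAux.IsClosed BR (Finset.univ : Finset ι) := BRAux.isClosed_univ BR
  cases n with
  | zero =>
    have huniv : (Finset.univ : Finset ι) = {BR.unit} := hn
    have hi : i = BR.unit := by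
      have hmem := Finset.mem_univ i
      rw [huniv, Finset.mem_singleton] at hmem
      exact hmem
    have hA : BR.adOf Finset.univ = {BR.unit} := by
      apply Finset.Subset.antisymm
      · intro k hk
        have := Finset.mem_univ k
        rwa [huniv] at this
      · intro k hk
        rw [Finset.mem_singleton] at hk
        subst hk
        exact BRAux.unit_mem_adOf BR hU
    refine ⟨1, ?_⟩
    rw [hA, hi, Finset.sum_singleton, Int.cast_one, one_mul]
  | succ n =>
    have hA' : BRAux.IsClosed BR (BR.adOf Finset.univ) := BRAux.adOf_closed BR hU
    have hsh : BR.upperOf (BR.adOf Finset.univ) n = {BR.unit} := by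
      rw [← BRAux.upperOf_succ_eq]; exact hn
    obtain ⟨m, hm⟩ := BRAux.Pmain BR f hf n (BR.adOf Finset.univ) hA' hsh i
    have h1 : 0 < BRAux.cf BR BR.unit i i := by
      rw [BRAux.cf_unit_left, if_pos rfl]; norm_num
    have htr := BRAux.transport BR f hf hU (Finset.mem_univ i) h1
    have hOu : BRAux.Orb BR (BR.adOf Finset.univ) BR.unit = BR.adOf Finset.univ := by
      ext k
      rw [BRAux.mem_Orb]
      constructor
      · rintro ⟨c, hc, hcf⟩
        rw [BRAux.cf_unit_left] at hcf
        split at hcf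
        · next he => rw [← he]; exact hc
        · exact absurd hcf (lt_irrefl 0)
      · intro hk
        exact ⟨k, hk, by rw [BRAux.cf_unit_left, if_pos rfl]; norm_num⟩
    refine ⟨m, ?_⟩
    calc (∑ k ∈ BR.adOf Finset.univ, f (BR.b k) ^ 2)
        = ∑ k ∈ BRAux.Orb BR (BR.adOf Finset.univ) BR.unit, f (BR.b k) ^ 2 := by
          rw [hOu]
      _ = ∑ k ∈ BRAux.Orb BR (BR.adOf Finset.univ) i, f (BR.b k) ^ 2 := htr.symm
      _ = (m : ℝ) * f (BR.b i) ^ 2 := hm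
end
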